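/- arXiv:1106.1928 — 3 statements merged into one kernel-verified Lean document; each statement's English description precedes it below -/
import Mathlib

section
/- Let β = (β_1,…,β_ℓ) be a weak composition of k with β_r ≤ α_r for all r. Then the following identity holds in ℤ[t_1,…,t_ℓ]: (Σ_{λ : β(λ)=β} wt(λ;α,k)) · ∏_{r=1}^ℓ ∏_{i=0}^{β_r−1} (t_r^{q^{β_r}} − t_r^{q^i}) = (∏_{r=1}^ℓ ∏_{i=0}^{β_r−1} (t_r^{q^{α_r}} − t_r^{q^i})) · ∏_{1≤r<s≤ℓ} ∏_{j=0}^{β_r−1} ∏_{i=0}^{α_s−β_s−1} [t_r^{q^{i+j}}, t_s^{q^{i+β_r}}]_q; that is, Σ_{λ:β(λ)=β} wt(λ;α,k) factors as (∏_{r=1}^ℓ ∏_{i=0}^{β_r−1} (t_r^{q^{α_r}} − t_r^{q^i})/(t_r^{q^{β_r}} − t_r^{q^i})) · ∏_{1≤r<s≤ℓ} ∏_{j=0}^{β_r−1} ∏_{i=0}^{α_s−β_s−1} [t_r^{q^{i+j}}, t_s^{q^{i+β_r}}]_q. -/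
/-!
Factorization of `Σ_{λ : β(λ)=β} wt(λ;α,k)` in `ℤ[t_1,…,t_ℓ]` (denominators cleared).
-/

open scoped Classical

noncomputable section

namespace CSP

/-- `[a,b]_Q := Σ_{i+j=Q-1} a^i b^j`. -/
def qbr {R : Type*} [CommRing R] (Q : ℕ) (a b : R) : R :=
  ∑ i ∈ Finset.range Q, a ^ i * b ^ (Q - 1 - i)

variable (q n k ℓ : ℕ) (α : Fin ℓ → ℕ)

/-- Sum of the parts of `α` strictly after `j`. -/
def tailSum (j : Fin ℓ) : ℕ := ∑ j' ∈ Finset.univ.filter (fun j' => j < j'), α j'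

/-- The (1-indexed) column `c` lies in column block `j` (blocks labeled from right to left). -/
def colInBlock (c : ℕ) (j : Fin ℓ) : Prop :=
  tailSum ℓ α j < c ∧ c ≤ tailSum ℓ α j + α j

/-- The (1-indexed) pivot column of row `i` : `p_i = λ_i + k - i + 1`. -/
def pivotCol (l : Fin k → ℕ) (i : Fin k) : ℕ := l i + k - (i : ℕ)

/-- `c` is a pivot column of the diagram of `l`. -/
def isPivotCol (l : Fin k → ℕ) (c : ℕ) : Prop := ∃ i : Fin k, pivotCol k l i = c

/-- `β(λ)_r` : the number of pivots lying in column block `r`. -/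
def betaOf (l : Fin k → ℕ) (r : Fin ℓ) : ℕ :=
  (Finset.univ.filter (fun i : Fin k => colInBlock ℓ α (pivotCol k l i) r)).card

/-- `B_r = β_1 + ⋯ + β_r`. -/
def betaPartial (l : Fin k → ℕ) (r : Fin ℓ) : ℕ :=
  ∑ r' ∈ Finset.univ.filter (fun r' => r' ≤ r), betaOf k ℓ α l r'

/-- The horizontal coordinate `i(x)` of a star in column `c` of column block `s`. -/
def ixc (l : Fin k → ℕ) (s : Fin ℓ) (c : ℕ) : ℕ :=
  ((Finset.Icc 1 n).filter
    (fun c' => colInBlock ℓ α c' s ∧ c' < c ∧ ¬ isPivotCol k l c')).card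

/-- The weight `wt(λ;α,k)`, as a product over the stars of the reduced
row-echelon diagram of `λ`. -/
def wt {R : Type*} [CommRing R] (l : Fin k → ℕ) (t : Fin ℓ → R) : R :=
  ∏ r : Fin ℓ, ∏ s : Fin ℓ, ∏ i : Fin k, ∏ c ∈ Finset.Icc 1 n,
    if colInBlock ℓ α (pivotCol k l i) r ∧ colInBlock ℓ α c s ∧
        c < pivotCol k l i ∧ ¬ isPivotCol k l c then
      qbr q
        (t r ^ q ^ (ixc n k ℓ α l s c + (betaPartial k ℓ α l r - ((i : ℕ) + 1))))
        (t s ^ q ^ (ixc n k ℓ α l s c + betaOf k ℓ α l r))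
    else 1

/-- Partitions `λ ⊆ (n-k)^k`, as antitone functions `Fin k → {0,…,n-k}`. -/
def boxPartitions : Finset (Fin k → Fin (n - k + 1)) :=
  Finset.univ.filter (fun f => ∀ i j : Fin k, i ≤ j → f j ≤ f i)

section Aux


variable {ℓ : ℕ}

/-- prefix sum `∑_{r' < r} γ r'`. -/
def pre (γ : Fin ℓ → ℕ) (r : Fin ℓ) : ℕ := ∑ r' ∈ Finset.univ.filter (fun r' => r' < r), γ r'
/-- prefix sum `∑_{r' ≤ r} γ r'`. -/
def pre' (γ : Fin ℓ → ℕ) (r : Fin ℓ) : ℕ := ∑ r' ∈ Finset.univ.filter (fun r' => r' ≤ r), γ r'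
/-- suffix sum `∑_{r' > r} γ r'`. -/
def suf (γ : Fin ℓ → ℕ) (r : Fin ℓ) : ℕ := ∑ r' ∈ Finset.univ.filter (fun r' => r < r'), γ r'

lemma pre'_eq (γ : Fin ℓ → ℕ) (r : Fin ℓ) : pre' γ r = pre γ r + γ r := by
  unfold pre pre'
  rw [show Finset.univ.filter (fun r' => r' ≤ r) =
      insert r (Finset.univ.filter (fun r' => r' < r)) by
    ext r'; simp [le_iff_lt_or_eq, or_comm]]
  rw [Finset.sum_insert (by simp)]
  ring

lemma pre_suf (γ : Fin ℓ → ℕ) (r : Fin ℓ) : pre' γ r + suf γ r = ∑ r', γ r' := by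
  unfold pre' suf
  rw [← Finset.sum_filter_add_sum_filter_not Finset.univ (fun r' => r' ≤ r)]
  congr 1
  apply Finset.sum_congr _ (fun _ _ => rfl)
  apply Finset.filter_congr
  intro r' _
  simp [not_le]

lemma pre'_le_pre {γ : Fin ℓ → ℕ} {r s : Fin ℓ} (h : r < s) : pre' γ r ≤ pre γ s := by
  apply Finset.sum_le_sum_of_subset
  intro r' hr'
  simp only [Finset.mem_filter, Finset.mem_univ, true_and] at hr' ⊢
  exact lt_of_le_of_lt hr' h

lemma pre'_le_total (γ : Fin ℓ → ℕ) (r : Fin ℓ) : pre' γ r ≤ ∑ r', γ r' := by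
  apply Finset.sum_le_sum_of_subset
  intro r' _; simp

lemma suf_le_total (γ : Fin ℓ → ℕ) (r : Fin ℓ) : suf γ r ≤ ∑ r', γ r' := by
  apply Finset.sum_le_sum_of_subset
  intro r' _; simp

lemma suf_add_le {γ : Fin ℓ → ℕ} {r s : Fin ℓ} (h : r < s) : suf γ s + γ s ≤ suf γ r := by
  have : suf γ s + γ s = ∑ r' ∈ insert s (Finset.univ.filter (fun r' => s < r')), γ r' := by
    rw [Finset.sum_insert (by simp)]; unfold suf; ring
  rw [this]
  apply Finset.sum_le_sum_of_subset
  intro r' hr'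
  simp only [Finset.mem_insert, Finset.mem_filter, Finset.mem_univ, true_and] at hr' ⊢
  rcases hr' with rfl | hr'
  · exact h
  · exact lt_trans h hr'

/-- Existence of the block containing `x` (prefix version). -/
lemma exists_block_pre (γ : Fin ℓ → ℕ) (x : ℕ) (hx : x < ∑ r, γ r) :
    ∃ r, pre γ r ≤ x ∧ x < pre' γ r := by
  have hℓ : 0 < ℓ := by
    by_contra h
    have : (Finset.univ : Finset (Fin ℓ)) = ∅ := by
      apply Finset.univ_eq_empty_iff.mpr
      exact ⟨fun i => absurd i.isLt (by omega)⟩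
    rw [Finset.sum_congr this (fun _ _ => rfl)] at hx
    simp at hx
  set rtop : Fin ℓ := ⟨ℓ - 1, by omega⟩ with hrtop
  have htop : pre' γ rtop = ∑ r', γ r' := by
    unfold pre'
    congr 1
    rw [Finset.filter_true_of_mem]
    intro r' _
    have h := r'.isLt
    rw [Fin.le_def]
    simp only [hrtop]
    omega
  set S := Finset.univ.filter (fun r => x < pre' γ r) with hS
  have hStop : rtop ∈ S := by
    simp only [hS, Finset.mem_filter, Finset.mem_univ, true_and, htop]
    exact hx
  set r₀ := S.min' ⟨rtop, hStop⟩ with hr₀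
  have hr₀S : r₀ ∈ S := S.min'_mem _
  simp only [hS, Finset.mem_filter, Finset.mem_univ, true_and] at hr₀S
  refine ⟨r₀, ?_, hr₀S⟩
  by_contra hcon
  push_neg at hcon
  rcases Finset.eq_empty_or_nonempty (Finset.univ.filter (fun r' => r' < r₀)) with he | hne
  · have : pre γ r₀ = 0 := by unfold pre; rw [he]; simp
    omega
  set r₁ := (Finset.univ.filter (fun r' => r' < r₀)).max' hne with hr₁
  have hr₁m : r₁ < r₀ := by
    have h2 := (Finset.univ.filter (fun r' => r' < r₀)).max'_mem hne
    rw [← hr₁] at h2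
    exact (Finset.mem_filter.mp h2).2
  have heq : pre' γ r₁ = pre γ r₀ := by
    unfold pre' pre
    congr 1
    ext r'
    simp only [Finset.mem_filter, Finset.mem_univ, true_and]
    constructor
    · intro h; exact lt_of_le_of_lt h hr₁m
    · intro h; exact Finset.le_max' _ _ (by simpa using h)
  have : r₁ ∈ S := by
    simp only [hS, Finset.mem_filter, Finset.mem_univ, true_and, heq]
    exact hcon
  have := S.min'_le _ this
  rw [← hr₀] at this
  exact absurd (lt_of_le_of_lt this hr₁m) (lt_irrefl _)

lemma block_pre_unique {γ : Fin ℓ → ℕ} {x : ℕ} {r r' : Fin ℓ}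
    (h : pre γ r ≤ x ∧ x < pre' γ r) (h' : pre γ r' ≤ x ∧ x < pre' γ r') : r = r' := by
  by_contra hne
  rcases lt_or_gt_of_ne hne with hlt | hlt
  · have := pre'_le_pre (γ := γ) hlt; omega
  · have := pre'_le_pre (γ := γ) hlt; omega

/-- Existence of the block containing column `c` (suffix version). -/
lemma exists_block_suf (γ : Fin ℓ → ℕ) (c : ℕ) (hc1 : 1 ≤ c) (hc2 : c ≤ ∑ r, γ r) :
    ∃ r, suf γ r < c ∧ c ≤ suf γ r + γ r := by
  obtain ⟨r, hr1, hr2⟩ := exists_block_pre γ (∑ r', γ r' - c) (by omega)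
  have h1 := pre_suf γ r
  have h2 := pre'_eq γ r
  exact ⟨r, by omega, by omega⟩

lemma block_suf_unique {γ : Fin ℓ → ℕ} {c : ℕ} {r r' : Fin ℓ}
    (h : suf γ r < c ∧ c ≤ suf γ r + γ r) (h' : suf γ r' < c ∧ c ≤ suf γ r' + γ r') :
    r = r' := by
  by_contra hne
  rcases lt_or_gt_of_ne hne with hlt | hlt
  · have := suf_add_le (γ := γ) hlt; omega
  · have := suf_add_le (γ := γ) hlt; omega

/-- Cardinality of an integer interval inside `Fin k`. -/
lemma card_fin_interval (k a b : ℕ) (hb : b ≤ k) :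
    (Finset.univ.filter (fun i : Fin k => a ≤ (i : ℕ) ∧ (i : ℕ) < b)).card = b - a := by
  rw [← Nat.card_Ico a b]
  refine Finset.card_bij (fun i _ => (i : ℕ)) ?_ ?_ ?_
  · intro i hi
    simp only [Finset.mem_filter, Finset.mem_univ, true_and] at hi
    simp [Finset.mem_Ico, hi.1, hi.2]
  · intro i _ j _ hij
    exact Fin.val_injective hij
  · intro m hm
    simp only [Finset.mem_Ico] at hm
    exact ⟨⟨m, by omega⟩, by simp [hm.1, hm.2], rfl⟩

/-- rank of `c` in a finite set `T` of naturals -/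
def rk (T : Finset ℕ) (c : ℕ) : ℕ := (T.filter (fun x => x < c)).card

lemma rk_lt_card {T : Finset ℕ} {c : ℕ} (hc : c ∈ T) : rk T c < T.card := by
  apply Finset.card_lt_card
  rw [Finset.ssubset_iff_of_subset (Finset.filter_subset _ _)]
  exact ⟨c, hc, by simp⟩

lemma rk_strict_mono {T : Finset ℕ} {c c' : ℕ} (hc : c ∈ T) (h : c < c') :
    rk T c < rk T c' := by
  apply Finset.card_lt_card
  rw [Finset.ssubset_iff_of_subset (Finset.monotone_filter_right _ (fun x _ hx => lt_trans hx h))]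
  exact ⟨c, by simp [hc, h], by simp⟩

lemma rk_inj {T : Finset ℕ} {c c' : ℕ} (hc : c ∈ T) (hc' : c' ∈ T) (h : rk T c = rk T c') :
    c = c' := by
  rcases lt_trichotomy c c' with hlt | he | hlt
  · exact absurd h (Nat.ne_of_lt (rk_strict_mono hc hlt))
  · exact he
  · exact absurd h.symm (Nat.ne_of_lt (rk_strict_mono hc' hlt))

lemma rk_lt_iff {T : Finset ℕ} {c P : ℕ} (hc : c ∈ T) :
    rk T c < (T.filter (fun x => x < P)).card ↔ c < P := by
  constructor
  · intro h
    by_contra hPc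
    push_neg at hPc
    have hss : T.filter (fun x => x < P) ⊆ T.filter (fun x => x < c) :=
      Finset.monotone_filter_right _ (fun x _ hx => lt_of_lt_of_le hx hPc)
    exact absurd (Finset.card_le_card hss) (by unfold rk at h; omega)
  · intro h
    apply Finset.card_lt_card
    rw [Finset.ssubset_iff_of_subset (Finset.monotone_filter_right _ (fun x _ hx => lt_trans hx h))]
    exact ⟨c, by simp [hc, h], by simp⟩

lemma rk_surj (T : Finset ℕ) (m : ℕ) (hm : m < T.card) : ∃ c ∈ T, rk T c = m := by
  set c : T := T.orderIsoOfFin rfl ⟨m, hm⟩ with hcd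
  refine ⟨(c : ℕ), c.2, ?_⟩
  unfold rk
  have himg : T.filter (fun x => x < (c : ℕ)) =
      Finset.image (fun j : Fin T.card => ((T.orderIsoOfFin rfl j : ℕ)))
        (Finset.univ.filter (fun j : Fin T.card => (j : ℕ) < m)) := by
    ext x
    simp only [Finset.mem_filter, Finset.mem_image, Finset.mem_univ, true_and]
    constructor
    · rintro ⟨hxT, hxc⟩
      refine ⟨(T.orderIsoOfFin rfl).symm ⟨x, hxT⟩, ?_, by simp⟩
      have : (⟨x, hxT⟩ : T) < c := by exact Subtype.mk_lt_mk.mpr hxc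
      have h2 := (T.orderIsoOfFin rfl).symm.lt_iff_lt.mpr this
      rw [hcd, OrderIso.symm_apply_apply] at h2
      exact h2
    · rintro ⟨j, hj, rfl⟩
      refine ⟨(T.orderIsoOfFin rfl j).2, ?_⟩
      have : j < (⟨m, hm⟩ : Fin T.card) := by exact hj
      have h2 := (T.orderIsoOfFin rfl).lt_iff_lt.mpr this
      exact Subtype.coe_lt_coe.mpr h2
  rw [himg, Finset.card_image_of_injective _
    (fun a b hab => by
      have := Subtype.coe_injective hab
      exact (T.orderIsoOfFin rfl).injective this)]
  have hfc := card_fin_interval T.card 0 m (le_of_lt hm)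
  rw [Nat.sub_zero] at hfc
  calc (Finset.univ.filter (fun j : Fin T.card => (j : ℕ) < m)).card
      = (Finset.univ.filter (fun j : Fin T.card => 0 ≤ (j : ℕ) ∧ (j : ℕ) < m)).card := by
        congr 1
        apply Finset.filter_congr
        intro j _
        simp
    _ = m := hfc



variable {R : Type*} [CommRing R]

lemma qbr_mul_sub (Q : ℕ) (a b : R) : qbr Q a b * (a - b) = a ^ Q - b ^ Q :=
  geom_sum₂_mul a b Q

lemma tpow_congr (t : R) (q : ℕ) {a b : ℕ} (h : a = b) : t ^ q ^ a = t ^ q ^ b := by rw [h]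

lemma tpow_q (t : R) (q a : ℕ) : (t ^ q ^ a) ^ q = t ^ q ^ (a + 1) := by
  rw [← pow_mul, ← pow_succ]

lemma row_telescope (q b j : ℕ) (t : R) (μ : ℕ) :
    (∏ i ∈ Finset.range μ, qbr q (t ^ q ^ (i + j)) (t ^ q ^ (i + b))) * (t ^ q ^ b - t ^ q ^ j)
      = t ^ q ^ (μ + b) - t ^ q ^ (μ + j) := by
  induction μ with
  | zero => simp
  | succ m ih =>
    rw [Finset.prod_range_succ]
    have h := qbr_mul_sub q (t ^ q ^ (m + j)) (t ^ q ^ (m + b))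
    rw [tpow_q, tpow_q] at h
    calc (∏ i ∈ Finset.range m, qbr q (t ^ q ^ (i + j)) (t ^ q ^ (i + b))) *
          qbr q (t ^ q ^ (m + j)) (t ^ q ^ (m + b)) * (t ^ q ^ b - t ^ q ^ j)
        = qbr q (t ^ q ^ (m + j)) (t ^ q ^ (m + b)) *
            ((∏ i ∈ Finset.range m, qbr q (t ^ q ^ (i + j)) (t ^ q ^ (i + b))) *
              (t ^ q ^ b - t ^ q ^ j)) := by ring
      _ = qbr q (t ^ q ^ (m + j)) (t ^ q ^ (m + b)) * (t ^ q ^ (m + b) - t ^ q ^ (m + j)) := by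
            rw [ih]
      _ = -(qbr q (t ^ q ^ (m + j)) (t ^ q ^ (m + b)) * (t ^ q ^ (m + j) - t ^ q ^ (m + b))) := by
            ring
      _ = t ^ q ^ (m + b + 1) - t ^ q ^ (m + j + 1) := by rw [h]; ring
      _ = t ^ q ^ (m + 1 + b) - t ^ q ^ (m + 1 + j) := by
            rw [tpow_congr t q (by omega : m + b + 1 = m + 1 + b),
                tpow_congr t q (by omega : m + j + 1 = m + 1 + j)]

/-- Monotone sequences `Fin β → ℕ` with values in `[lo, e]`. -/
def monoSeqs (β lo e : ℕ) : Finset (Fin β → ℕ) :=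
  (Fintype.piFinset fun _ : Fin β => Finset.Icc lo e).filter Monotone

lemma monotone_cons {β : ℕ} (m : ℕ) (ν : Fin β → ℕ) (hν : Monotone ν) (h : ∀ j, m ≤ ν j) :
    Monotone (Fin.cons m ν : Fin (β+1) → ℕ) := by
  intro a b hab
  rcases Fin.eq_zero_or_eq_succ a with rfl | ⟨i, rfl⟩
  · rcases Fin.eq_zero_or_eq_succ b with rfl | ⟨j, rfl⟩
    · exact le_rfl
    · simpa using h j
  · rcases Fin.eq_zero_or_eq_succ b with rfl | ⟨j, rfl⟩
    · exact absurd (Fin.le_zero_iff.mp hab) (Fin.succ_ne_zero i)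
    · simp only [Fin.cons_succ]
      exact hν (by simpa [Fin.succ_le_succ_iff] using hab)

lemma sum_monoSeqs_succ (β lo e : ℕ) (F : (Fin (β+1) → ℕ) → R) :
    ∑ μ ∈ monoSeqs (β+1) lo e, F μ
      = ∑ m ∈ Finset.Icc lo e, ∑ ν ∈ monoSeqs β m e, F (Fin.cons m ν) := by
  rw [show (∑ m ∈ Finset.Icc lo e, ∑ ν ∈ monoSeqs β m e, F (Fin.cons m ν))
      = ∑ p ∈ (Finset.Icc lo e).sigma (fun m => monoSeqs β m e), F (Fin.cons p.1 p.2) from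
    (Finset.sum_sigma (Finset.Icc lo e) (fun m => monoSeqs β m e)
      (fun p => F (Fin.cons p.1 p.2))).symm]
  apply Finset.sum_nbij' (i := fun μ => (⟨μ 0, Fin.tail μ⟩ : Σ _ : ℕ, Fin β → ℕ))
    (j := fun p => Fin.cons p.1 p.2)
  · intro μ hμ
    simp only [monoSeqs, Finset.mem_filter, Fintype.mem_piFinset] at hμ
    obtain ⟨hmem, hmono⟩ := hμ
    simp only [Finset.mem_sigma, monoSeqs, Finset.mem_filter, Fintype.mem_piFinset]
    refine ⟨hmem 0, ⟨fun j => ?_, fun a b hab => hmono (by simpa [Fin.succ_le_succ_iff] using hab)⟩⟩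
    · have h1 := (hmem j.succ)
      simp only [Finset.mem_Icc] at h1 ⊢
      exact ⟨hmono (Fin.zero_le _), h1.2⟩
  · intro p hp
    simp only [Finset.mem_sigma, monoSeqs, Finset.mem_filter, Fintype.mem_piFinset,
      Finset.mem_Icc] at hp
    obtain ⟨h0, hmem, hmono⟩ := hp
    simp only [monoSeqs, Finset.mem_filter, Fintype.mem_piFinset]
    constructor
    · intro a
      rcases Fin.eq_zero_or_eq_succ a with rfl | ⟨i, rfl⟩
      · simpa [Finset.mem_Icc] using h0
      · simp only [Fin.cons_succ, Finset.mem_Icc]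
        exact ⟨le_trans h0.1 (hmem i).1, (hmem i).2⟩
    · exact monotone_cons p.1 p.2 hmono (fun j => (hmem j).1)
  · intro μ hμ; exact Fin.cons_self_tail μ
  · intro p hp; simp
  · intro μ hμ; rw [Fin.cons_self_tail]

lemma sum_prod_sub (q : ℕ) (t : R) :
    ∀ β lo e d, lo ≤ e →
    (∑ μ ∈ monoSeqs β lo e,
        ∏ j : Fin β, (t ^ q ^ (μ j + β + d) - t ^ q ^ (μ j + (j : ℕ) + d)))
      = ∏ i ∈ Finset.range β, (t ^ q ^ (e + β + d) - t ^ q ^ (lo + i + d)) := by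
  intro β
  induction β with
  | zero =>
    intro lo e d _
    have h1 : (finZeroElim : Fin 0 → ℕ) ∈ monoSeqs 0 lo e := by
      simp only [monoSeqs, Finset.mem_filter, Fintype.mem_piFinset]
      exact ⟨fun a => a.elim0, fun a => a.elim0⟩
    have h2 : monoSeqs 0 lo e = {finZeroElim} := by
      apply Finset.eq_singleton_iff_unique_mem.mpr
      exact ⟨h1, fun f _ => funext fun a => a.elim0⟩
    rw [h2]; simp
  | succ b ih =>
    intro lo e d hle
    rw [sum_monoSeqs_succ]
    set E := e + (b + 1) + d with hE
    set T := fun m => ∏ i ∈ Finset.range (b + 1), (t ^ q ^ E - t ^ q ^ (m + i + d)) with hT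
    have key : ∀ m ∈ Finset.Icc lo e,
        (∑ ν ∈ monoSeqs b m e,
          ∏ j : Fin (b+1), (t ^ q ^ ((Fin.cons m ν : Fin (b+1) → ℕ) j + (b+1) + d)
            - t ^ q ^ ((Fin.cons m ν : Fin (b+1) → ℕ) j + (j : ℕ) + d)))
        = T m - T (m + 1) := by
      intro m hm
      simp only [Finset.mem_Icc] at hm
      have step1 : ∀ ν : Fin b → ℕ,
          (∏ j : Fin (b+1), (t ^ q ^ ((Fin.cons m ν : Fin (b+1) → ℕ) j + (b+1) + d)
            - t ^ q ^ ((Fin.cons m ν : Fin (b+1) → ℕ) j + (j : ℕ) + d)))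
          = (t ^ q ^ (m + (b+1) + d) - t ^ q ^ (m + d)) *
            ∏ j : Fin b, (t ^ q ^ (ν j + b + (d+1)) - t ^ q ^ (ν j + (j : ℕ) + (d+1))) := by
        intro ν
        rw [Fin.prod_univ_succ]
        simp only [Fin.cons_zero, Fin.cons_succ, Fin.val_zero, Fin.val_succ]
        congr 1
        apply Finset.prod_congr rfl
        intro j _
        rw [tpow_congr t q (by omega : ν j + (b+1) + d = ν j + b + (d+1)),
            tpow_congr t q (by omega : ν j + ((j:ℕ)+1) + d = ν j + (j:ℕ) + (d+1))]
      rw [Finset.sum_congr rfl (fun ν _ => step1 ν), ← Finset.mul_sum,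
        ih m e (d+1) hm.2]
      -- now show factor * ∏_{i<b} (t^{q^{e+b+(d+1)}} - t^{q^{m+i+(d+1)}}) = T m - T (m+1)
      have hTm : T m = (t ^ q ^ E - t ^ q ^ (m + d)) *
          ∏ i ∈ Finset.range b, (t ^ q ^ E - t ^ q ^ (m + (i+1) + d)) := by
        simp only [hT]
        rw [Finset.prod_range_succ',
          tpow_congr t q (show m + 0 + d = m + d by omega), mul_comm]
      have hTm1 : T (m+1) = (∏ i ∈ Finset.range b, (t ^ q ^ E - t ^ q ^ (m + (i+1) + d))) *
          (t ^ q ^ E - t ^ q ^ (m + (b+1) + d)) := by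
        simp only [hT]
        rw [Finset.prod_range_succ]
        congr 1
        · apply Finset.prod_congr rfl; intro i _
          rw [tpow_congr t q (by omega : m + 1 + i + d = m + (i+1) + d)]
        · rw [tpow_congr t q (by omega : m + 1 + b + d = m + (b+1) + d)]
      have hconv : (∏ i ∈ Finset.range b, (t ^ q ^ (e + b + (d+1)) - t ^ q ^ (m + i + (d+1))))
          = ∏ i ∈ Finset.range b, (t ^ q ^ E - t ^ q ^ (m + (i+1) + d)) := by
        apply Finset.prod_congr rfl
        intro i _
        rw [tpow_congr t q (show m + i + (d+1) = m + (i+1) + d by omega),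
          tpow_congr t q (show e + b + (d + 1) = E by omega)]
      rw [hconv, hTm, hTm1]
      ring
    rw [Finset.sum_congr rfl key, ← Finset.Ico_add_one_right_eq_Icc, Finset.sum_Ico_eq_sum_range]
    rw [show (∑ i ∈ Finset.range (e + 1 - lo), (T (lo + i) - T (lo + i + 1)))
        = T lo - T (lo + (e + 1 - lo)) from Finset.sum_range_sub' (fun i => T (lo + i)) _]
    have hT0 : T (lo + (e + 1 - lo)) = 0 := by
      have : lo + (e + 1 - lo) = e + 1 := by omega
      rw [this]; simp only [hT]
      apply Finset.prod_eq_zero (Finset.self_mem_range_succ b)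
      rw [tpow_congr t q (by omega : e + 1 + b + d = E)]
      exact sub_self _
    rw [hT0, sub_zero]

lemma per_block (q : ℕ) (t : R) (β e : ℕ) :
    (∑ μ ∈ monoSeqs β 0 e,
        ∏ j : Fin β, ∏ i ∈ Finset.range (μ j),
          qbr q (t ^ q ^ (i + (j : ℕ))) (t ^ q ^ (i + β)))
      * ∏ j ∈ Finset.range β, (t ^ q ^ β - t ^ q ^ j)
    = ∏ i ∈ Finset.range β, (t ^ q ^ (e + β) - t ^ q ^ i) := by
  rw [Finset.sum_mul]
  have step : ∀ μ ∈ monoSeqs β 0 e,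
      (∏ j : Fin β, ∏ i ∈ Finset.range (μ j),
          qbr q (t ^ q ^ (i + (j : ℕ))) (t ^ q ^ (i + β)))
        * ∏ j ∈ Finset.range β, (t ^ q ^ β - t ^ q ^ j)
      = ∏ j : Fin β, (t ^ q ^ (μ j + β + 0) - t ^ q ^ (μ j + (j : ℕ) + 0)) := by
    intro μ _
    rw [← Fin.prod_univ_eq_prod_range (fun j => t ^ q ^ β - t ^ q ^ j) β,
      ← Finset.prod_mul_distrib]
    apply Finset.prod_congr rfl
    intro j _
    rw [row_telescope q β (j : ℕ) t (μ j),
      tpow_congr t q (by omega : μ j + β = μ j + β + 0),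
      tpow_congr t q (by omega : μ j + (j:ℕ) = μ j + (j:ℕ) + 0)]
  rw [Finset.sum_congr rfl step, sum_prod_sub q t β 0 e 0 (Nat.zero_le e)]
  apply Finset.prod_congr rfl
  intro i _
  rw [tpow_congr t q (by omega : e + β + 0 = e + β),
    tpow_congr t q (by omega : 0 + i + 0 = i)]


end Aux

section Global

variable {q n k ℓ : ℕ} {α β : Fin ℓ → ℕ} {l : Fin k → ℕ}

lemma tailSum_eq_suf (r : Fin ℓ) : tailSum ℓ α r = suf α r := rfl

lemma suf_add_self_le_total (γ : Fin ℓ → ℕ) (r : Fin ℓ) : suf γ r + γ r ≤ ∑ r', γ r' := by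
  have h1 := pre_suf γ r
  have h2 := pre'_eq γ r
  omega

lemma suf_split (hβle : ∀ r, β r ≤ α r) (r : Fin ℓ) :
    suf (fun r' => α r' - β r') r + suf β r = suf α r := by
  unfold suf
  rw [← Finset.sum_add_distrib]
  apply Finset.sum_congr rfl
  intro r' _
  have := hβle r'
  omega

/-- `tailSum α r + pre' β r = csh r + k`. -/
lemma suf_pre'_eq (hβle : ∀ r, β r ≤ α r) (hβ : ∑ r, β r = k) (r : Fin ℓ) :
    suf α r + pre' β r = suf (fun r' => α r' - β r') r + k := by
  have h1 := suf_split (α := α) hβle r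
  have h2 := pre_suf β r
  omega

section WithL

variable (hk : k ≤ n) (hl : ∀ i, l i ≤ n - k)
  (hanti : ∀ i j : Fin k, i ≤ j → l j ≤ l i)

include hk hl in
lemma pivot_bounds (i : Fin k) : 1 ≤ pivotCol k l i ∧ pivotCol k l i ≤ n := by
  have h1 := i.isLt
  have h2 := hl i
  unfold pivotCol
  omega

include hanti in
lemma pivot_anti {i j : Fin k} (h : i < j) : pivotCol k l j < pivotCol k l i := by
  have h1 := hanti i j (le_of_lt h)
  have h2 := j.isLt
  have h3 : (i : ℕ) < (j : ℕ) := h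
  unfold pivotCol
  omega

include hanti in
lemma pivot_lt_iff {i j : Fin k} : pivotCol k l j < pivotCol k l i ↔ i < j := by
  constructor
  · intro h
    by_contra hc
    push_neg at hc
    rcases eq_or_lt_of_le hc with rfl | hlt
    · exact lt_irrefl _ h
    · exact absurd (pivot_anti hanti hlt) (by omega)
  · exact pivot_anti hanti

end WithL

section WithF

variable (hn : ∑ r, α r = n) (hk : k ≤ n) (hβ : ∑ r, β r = k) (hβle : ∀ r, β r ≤ α r)
  (hl : ∀ i, l i ≤ n - k) (hanti : ∀ i j : Fin k, i ≤ j → l j ≤ l i)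
  (hfb : ∀ r, betaOf k ℓ α l r = β r)

include hn hk hl in
lemma pivot_block_exists (i : Fin k) : ∃ r, colInBlock ℓ α (pivotCol k l i) r := by
  have hb := pivot_bounds hk hl i
  obtain ⟨r, h1, h2⟩ := exists_block_suf α (pivotCol k l i) hb.1 (by rw [hn]; exact hb.2)
  exact ⟨r, h1, h2⟩

lemma fiber_card (r : Fin ℓ) :
    (Finset.univ.filter (fun i : Fin k => colInBlock ℓ α (pivotCol k l i) r)).card
      = betaOf k ℓ α l r := rfl

include hn hk hβ hl hanti hfb in
lemma block_row_bounds {i : Fin k} {r : Fin ℓ} (hr : colInBlock ℓ α (pivotCol k l i) r) :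
    pre β r ≤ (i : ℕ) ∧ (i : ℕ) < pre' β r := by
  constructor
  · -- lower bound
    have hsub : (Finset.univ.filter (fun r' => r' < r)).biUnion
          (fun r' => Finset.univ.filter (fun i' : Fin k => colInBlock ℓ α (pivotCol k l i') r'))
        ⊆ Finset.univ.filter (fun i' : Fin k => (i' : ℕ) < (i : ℕ)) := by
      intro i' hi'
      simp only [Finset.mem_biUnion, Finset.mem_filter, Finset.mem_univ, true_and] at hi' ⊢
      obtain ⟨r', hr'lt, hr'⟩ := hi'
      have h1 : suf α r + α r ≤ suf α r' := suf_add_le hr'lt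
      have h2 : pivotCol k l i < pivotCol k l i' := by
        have := hr'.1
        have := hr.2
        rw [tailSum_eq_suf] at *
        omega
      exact (pivot_lt_iff hanti).mp h2
    have hcard := Finset.card_biUnion (s := Finset.univ.filter (fun r' => r' < r))
      (t := fun r' => Finset.univ.filter (fun i' : Fin k => colInBlock ℓ α (pivotCol k l i') r'))
      (fun r1 _ r2 _ hne => by
        apply Finset.disjoint_left.mpr
        intro i' h1 h2
        simp only [Finset.mem_filter, Finset.mem_univ, true_and] at h1 h2
        exact hne (block_suf_unique h1 h2))
    have hc2 : ∑ r' ∈ Finset.univ.filter (fun r' => r' < r),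
        (Finset.univ.filter (fun i' : Fin k => colInBlock ℓ α (pivotCol k l i') r')).card
        = pre β r := by
      unfold pre
      apply Finset.sum_congr rfl
      intro r' _
      rw [fiber_card, hfb]
    have hle := Finset.card_le_card hsub
    rw [hcard, hc2] at hle
    have hcf : (Finset.univ.filter (fun i' : Fin k => (i' : ℕ) < (i : ℕ))).card = (i : ℕ) := by
      calc (Finset.univ.filter (fun i' : Fin k => (i' : ℕ) < (i : ℕ))).card
          = (Finset.univ.filter (fun i' : Fin k => 0 ≤ (i' : ℕ) ∧ (i' : ℕ) < (i : ℕ))).card := by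
            congr 1
            apply Finset.filter_congr
            intro j _
            simp
        _ = (i : ℕ) - 0 := card_fin_interval k 0 (i : ℕ) (le_of_lt i.isLt)
        _ = (i : ℕ) := Nat.sub_zero _
    omega
  · -- upper bound
    have hsub : Finset.univ.filter (fun i' : Fin k => (i' : ℕ) ≤ (i : ℕ))
        ⊆ (Finset.univ.filter (fun r' => r' ≤ r)).biUnion
          (fun r' => Finset.univ.filter
            (fun i' : Fin k => colInBlock ℓ α (pivotCol k l i') r')) := by
      intro i' hi'
      simp only [Finset.mem_biUnion, Finset.mem_filter, Finset.mem_univ, true_and] at hi' ⊢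
      obtain ⟨r'', h1, h2⟩ := pivot_block_exists hn hk hl i'
      refine ⟨r'', ?_, ⟨h1, h2⟩⟩
      by_contra hgt
      push_neg at hgt
      have h3 : suf α r'' + α r'' ≤ suf α r := suf_add_le hgt
      have h4 : pivotCol k l i ≤ pivotCol k l i' := by
        rcases eq_or_lt_of_le hi' with he | hlt
        · have : i' = i := Fin.ext he
          rw [this]
        · exact le_of_lt (pivot_anti hanti hlt)
      have h5 := hr.1
      rw [tailSum_eq_suf] at *
      omega
    have hcard := Finset.card_biUnion (s := Finset.univ.filter (fun r' => r' ≤ r))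
      (t := fun r' => Finset.univ.filter (fun i' : Fin k => colInBlock ℓ α (pivotCol k l i') r'))
      (fun r1 _ r2 _ hne => by
        apply Finset.disjoint_left.mpr
        intro i' h1 h2
        simp only [Finset.mem_filter, Finset.mem_univ, true_and] at h1 h2
        exact hne (block_suf_unique h1 h2))
    have hc2 : ∑ r' ∈ Finset.univ.filter (fun r' => r' ≤ r),
        (Finset.univ.filter (fun i' : Fin k => colInBlock ℓ α (pivotCol k l i') r')).card
        = pre' β r := by
      unfold pre'
      apply Finset.sum_congr rfl
      intro r' _
      rw [fiber_card, hfb]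
    have hle := Finset.card_le_card hsub
    rw [hcard, hc2] at hle
    have hcf : (Finset.univ.filter (fun i' : Fin k => (i' : ℕ) ≤ (i : ℕ))).card
        = (i : ℕ) + 1 := by
      calc (Finset.univ.filter (fun i' : Fin k => (i' : ℕ) ≤ (i : ℕ))).card
          = (Finset.univ.filter (fun i' : Fin k => 0 ≤ (i' : ℕ) ∧ (i' : ℕ) < (i : ℕ) + 1)).card := by
            congr 1
            apply Finset.filter_congr
            intro j _
            simp [Nat.lt_succ_iff]
        _ = (i : ℕ) + 1 - 0 := card_fin_interval k 0 ((i : ℕ) + 1) i.isLt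
        _ = (i : ℕ) + 1 := Nat.sub_zero _
    omega

include hn hk hβ hl hanti hfb in
lemma mem_rowblock_iff {i : Fin k} {r : Fin ℓ} :
    colInBlock ℓ α (pivotCol k l i) r ↔ pre β r ≤ (i : ℕ) ∧ (i : ℕ) < pre' β r := by
  constructor
  · exact block_row_bounds hn hk hβ hl hanti hfb
  · intro h
    obtain ⟨r'', hr''⟩ := pivot_block_exists hn hk hl i
    have hb := block_row_bounds hn hk hβ hl hanti hfb hr''
    have : r'' = r := by
      by_contra hne
      rcases lt_or_gt_of_ne hne with hlt | hlt
      · have := pre'_le_pre (γ := β) hlt; omega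
      · have := pre'_le_pre (γ := β) hlt; omega
    rw [← this]
    exact hr''

end WithF
end Global

section Counts

variable {R : Type*} [CommRing R]

/-- generic: product over a finset of naturals, reindexed by rank -/
lemma prod_rank (T : Finset ℕ) (G : ℕ → R) :
    ∏ c ∈ T, G (rk T c) = ∏ m ∈ Finset.range T.card, G m := by
  apply Finset.prod_bij (fun c _ => rk T c)
  · intro c hc; exact Finset.mem_range.mpr (rk_lt_card hc)
  · intro a ha b hb hab; exact rk_inj ha hb hab
  · intro m hm
    obtain ⟨c, hc, hrk⟩ := rk_surj T m (Finset.mem_range.mp hm)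
    exact ⟨c, hc, hrk⟩
  · intro c _; rfl

lemma prod_rank_ite (T : Finset ℕ) (G : ℕ → R) (P : ℕ) :
    (∏ c ∈ T, if c < P then G (rk T c) else 1)
      = ∏ m ∈ Finset.range ((T.filter (fun x => x < P)).card), G m := by
  calc (∏ c ∈ T, if c < P then G (rk T c) else 1)
      = ∏ c ∈ T, (if rk T c < (T.filter (fun x => x < P)).card then G (rk T c) else 1) :=
        Finset.prod_congr rfl fun c hc => if_congr (Iff.symm (rk_lt_iff hc)) rfl rfl
    _ = ∏ m ∈ Finset.range T.card,
          (if m < (T.filter (fun x => x < P)).card then G m else 1) :=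
        prod_rank T (fun m => if m < (T.filter (fun x => x < P)).card then G m else 1)
    _ = ∏ m ∈ (Finset.range T.card).filter
          (fun m => m < (T.filter (fun x => x < P)).card), G m :=
        (Finset.prod_filter _ _).symm
    _ = ∏ m ∈ Finset.range ((T.filter (fun x => x < P)).card), G m := by
        congr 1
        have hle := Finset.card_filter_le T (fun x => x < P)
        ext m
        simp only [Finset.mem_filter, Finset.mem_range]
        omega

variable {q n k ℓ : ℕ} {α β : Fin ℓ → ℕ} {l : Fin k → ℕ}

/-- the set of non-pivot columns in column block `s`. -/
def NP (n k ℓ : ℕ) (α : Fin ℓ → ℕ) (l : Fin k → ℕ) (s : Fin ℓ) : Finset ℕ :=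
  (Finset.Icc 1 n).filter (fun c => colInBlock ℓ α c s ∧ ¬ isPivotCol k l c)

lemma ixc_eq_rk (s : Fin ℓ) (c : ℕ) : ixc n k ℓ α l s c = rk (NP n k ℓ α l s) c := by
  unfold ixc rk NP
  rw [Finset.filter_filter]
  apply congrArg
  apply Finset.filter_congr
  intro c' _
  constructor
  · rintro ⟨h1, h2, h3⟩; exact ⟨⟨h1, h3⟩, h2⟩
  · rintro ⟨⟨h1, h3⟩, h2⟩; exact ⟨h1, h2, h3⟩

section WithF2

variable (hn : ∑ r, α r = n) (hk : k ≤ n) (hβ : ∑ r, β r = k) (hβle : ∀ r, β r ≤ α r)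
  (hl : ∀ i, l i ≤ n - k) (hanti : ∀ i j : Fin k, i ≤ j → l j ≤ l i)
  (hfb : ∀ r, betaOf k ℓ α l r = β r)

include hn in
lemma filter_colInBlock_eq (s : Fin ℓ) :
    (Finset.Icc 1 n).filter (fun c => colInBlock ℓ α c s)
      = Finset.Icc (suf α s + 1) (suf α s + α s) := by
  have h := suf_add_self_le_total α s
  rw [hn] at h
  ext c
  rw [Finset.mem_filter]
  simp only [Finset.mem_filter, Finset.mem_Icc, colInBlock, tailSum_eq_suf]
  omega

include hanti in
lemma pivot_injective : Function.Injective (pivotCol k l) := by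
  intro a b hab
  by_contra hne
  rcases lt_or_gt_of_ne hne with hlt | hlt
  · exact absurd hab (Nat.ne_of_gt (pivot_anti hanti hlt))
  · exact absurd hab (Nat.ne_of_lt (pivot_anti hanti hlt))

include hk hl in
lemma filter_pivcols_eq (s : Fin ℓ) :
    (Finset.Icc 1 n).filter (fun c => colInBlock ℓ α c s ∧ isPivotCol k l c)
      = (Finset.univ.filter
          (fun i : Fin k => colInBlock ℓ α (pivotCol k l i) s)).image (pivotCol k l) := by
  ext c
  simp only [Finset.mem_filter, Finset.mem_Icc, Finset.mem_image, Finset.mem_univ, true_and]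
  constructor
  · rintro ⟨hIcc, hcol, i, rfl⟩
    exact ⟨i, hcol, rfl⟩
  · rintro ⟨i, hcol, rfl⟩
    have hb := pivot_bounds hk hl i
    exact ⟨⟨hb.1, hb.2⟩, hcol, ⟨i, rfl⟩⟩

include hn hk hβle hl hanti hfb in
lemma NP_card (s : Fin ℓ) : (NP n k ℓ α l s).card = α s - β s := by
  have key := Finset.card_filter_add_card_filter_not
    (s := (Finset.Icc 1 n).filter (fun c => colInBlock ℓ α c s)) (fun c => isPivotCol k l c)
  have h1 : ((Finset.Icc 1 n).filter (fun c => colInBlock ℓ α c s)).filter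
      (fun c => isPivotCol k l c)
      = (Finset.Icc 1 n).filter (fun c => colInBlock ℓ α c s ∧ isPivotCol k l c) := by
    rw [Finset.filter_filter]
  have h2 : ((Finset.Icc 1 n).filter (fun c => colInBlock ℓ α c s)).filter
      (fun c => ¬ isPivotCol k l c) = NP n k ℓ α l s := by
    rw [Finset.filter_filter]; rfl
  rw [h1, h2, filter_pivcols_eq hk hl, filter_colInBlock_eq hn] at key
  rw [Finset.card_image_of_injOn (Set.injOn_of_injective (pivot_injective hanti))] at key
  rw [fiber_card, hfb, Nat.card_Icc] at key
  have hβα : β s ≤ α s := hβle s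
  omega

include hn hk hβ hβle hl hanti hfb in
lemma stars_below_card {i : Fin k} {r : Fin ℓ}
    (hr : colInBlock ℓ α (pivotCol k l i) r) :
    ((NP n k ℓ α l r).filter (fun c => c < pivotCol k l i)).card
      + suf (fun r' => α r' - β r') r = l i := by
  have hrb := block_row_bounds hn hk hβ hl hanti hfb hr
  have hr1 : suf α r < pivotCol k l i := hr.1
  have hr2 : pivotCol k l i ≤ suf α r + α r := hr.2
  -- below-columns of the block:
  have hA : (Finset.Icc (suf α r + 1) (suf α r + α r)).filter (fun c => c < pivotCol k l i)
      = Finset.Icc (suf α r + 1) (pivotCol k l i - 1) := by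
    ext c
    simp only [Finset.mem_filter, Finset.mem_Icc]
    omega
  -- pivots below:
  have hP : ((Finset.univ.filter
        (fun i' : Fin k => colInBlock ℓ α (pivotCol k l i') r)).image (pivotCol k l)).filter
        (fun c => c < pivotCol k l i)
      = (Finset.univ.filter
          (fun i' : Fin k => (i : ℕ) + 1 ≤ (i' : ℕ) ∧ (i' : ℕ) < pre' β r)).image
            (pivotCol k l) := by
    ext c
    simp only [Finset.mem_filter, Finset.mem_image, Finset.mem_univ, true_and]
    constructor
    · rintro ⟨⟨i', hcol, rfl⟩, hlt⟩
      have h3 := (pivot_lt_iff hanti).mp hlt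
      have h4 := block_row_bounds hn hk hβ hl hanti hfb hcol
      exact ⟨i', ⟨by exact_mod_cast Nat.succ_le_of_lt h3, h4.2⟩, rfl⟩
    · rintro ⟨i', ⟨hgt, hlt⟩, rfl⟩
      have hcol : colInBlock ℓ α (pivotCol k l i') r :=
        mem_rowblock_iff hn hk hβ hl hanti hfb |>.mpr ⟨by omega, hlt⟩
      refine ⟨⟨i', hcol, rfl⟩, ?_⟩
      exact pivot_anti hanti (by rw [Fin.lt_def]; omega)
  -- put together
  have key := Finset.card_filter_add_card_filter_not
    (s := ((Finset.Icc 1 n).filter (fun c => colInBlock ℓ α c r)).filter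
        (fun c => c < pivotCol k l i))
    (fun c => isPivotCol k l c)
  have e1 : (((Finset.Icc 1 n).filter (fun c => colInBlock ℓ α c r)).filter
        (fun c => c < pivotCol k l i)).filter (fun c => isPivotCol k l c)
      = (((Finset.Icc 1 n).filter (fun c => colInBlock ℓ α c r ∧ isPivotCol k l c))).filter
          (fun c => c < pivotCol k l i) := by
    rw [Finset.filter_filter, Finset.filter_filter, Finset.filter_filter]
    apply Finset.filter_congr
    intro c _
    tauto
  have e2 : (((Finset.Icc 1 n).filter (fun c => colInBlock ℓ α c r)).filter
        (fun c => c < pivotCol k l i)).filter (fun c => ¬ isPivotCol k l c)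
      = (NP n k ℓ α l r).filter (fun c => c < pivotCol k l i) := by
    unfold NP
    rw [Finset.filter_filter, Finset.filter_filter, Finset.filter_filter]
    apply Finset.filter_congr
    intro c _
    tauto
  rw [e1, e2, filter_pivcols_eq hk hl, hP, filter_colInBlock_eq hn, hA] at key
  rw [Finset.card_image_of_injOn (Set.injOn_of_injective (pivot_injective hanti))] at key
  have hcardI : (Finset.univ.filter
      (fun i' : Fin k => (i : ℕ) + 1 ≤ (i' : ℕ) ∧ (i' : ℕ) < pre' β r)).card
      = pre' β r - ((i : ℕ) + 1) := by
    apply card_fin_interval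
    rw [← hβ]
    exact pre'_le_total β r
  rw [hcardI, Nat.card_Icc] at key
  have hsp := suf_pre'_eq hβle hβ r
  have hik := i.isLt
  have hpc : pivotCol k l i = l i + k - (i : ℕ) := rfl
  omega

include hn hk hβ hβle hl hanti hfb in
lemma stars_below_le {i : Fin k} {r : Fin ℓ}
    (hr : colInBlock ℓ α (pivotCol k l i) r) :
    ((NP n k ℓ α l r).filter (fun c => c < pivotCol k l i)).card ≤ α r - β r := by
  calc ((NP n k ℓ α l r).filter (fun c => c < pivotCol k l i)).card
      ≤ (NP n k ℓ α l r).card := Finset.card_filter_le _ _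
    _ = α r - β r := NP_card hn hk hβle hl hanti hfb r

end WithF2
end Counts

section WtFact

variable {R : Type*} [CommRing R]
variable {q n k ℓ : ℕ} {α β : Fin ℓ → ℕ} {l : Fin k → ℕ}

/-- the off-diagonal factor -/
def offDiag (q : ℕ) {R : Type*} [CommRing R] {ℓ : ℕ} (α β : Fin ℓ → ℕ) (t : Fin ℓ → R) : R :=
  ∏ r : Fin ℓ, ∏ s : Fin ℓ,
    if r < s then
      ∏ j ∈ Finset.range (β r), ∏ i ∈ Finset.range (α s - β s),
        qbr q (t r ^ q ^ (i + j)) (t s ^ q ^ (i + β r))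
    else 1

/-- the diagonal weight of block `r` given local data `μ` -/
def diagW (q : ℕ) {R : Type*} [CommRing R] {ℓ : ℕ} (β : Fin ℓ → ℕ) (r : Fin ℓ)
    (μ : Fin (β r) → ℕ) (t : Fin ℓ → R) : R :=
  ∏ j : Fin (β r), ∏ i ∈ Finset.range (μ j),
    qbr q (t r ^ q ^ (i + (j : ℕ))) (t r ^ q ^ (i + β r))

/-- local data extracted from `l` -/
def toLoc (n k ℓ : ℕ) (α β : Fin ℓ → ℕ) (l : Fin k → ℕ) (r : Fin ℓ) (j : Fin (β r)) : ℕ :=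
  if h : pre' β r - 1 - (j : ℕ) < k then
    l ⟨pre' β r - 1 - (j : ℕ), h⟩ - suf (fun r' => α r' - β r') r
  else 0

section WithF3

variable (hn : ∑ r, α r = n) (hk : k ≤ n) (hβ : ∑ r, β r = k) (hβle : ∀ r, β r ≤ α r)
  (hl : ∀ i, l i ≤ n - k) (hanti : ∀ i j : Fin k, i ≤ j → l j ≤ l i)
  (hfb : ∀ r, betaOf k ℓ α l r = β r)

include hfb in
lemma betaPartial_eq (r : Fin ℓ) : betaPartial k ℓ α l r = pre' β r := by
  unfold betaPartial pre'
  exact Finset.sum_congr rfl fun r' _ => hfb r'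

include hn hk hβ hl hanti hfb in
lemma prod_rowblock (r : Fin ℓ) (F : ℕ → R) :
    ∏ i ∈ Finset.univ.filter (fun i : Fin k => colInBlock ℓ α (pivotCol k l i) r),
        F (pre' β r - 1 - (i : ℕ))
      = ∏ j ∈ Finset.range (β r), F j := by
  have hpe := pre'_eq β r
  have hple : pre' β r ≤ k := by rw [← hβ]; exact pre'_le_total β r
  refine Finset.prod_bij (fun i _ => pre' β r - 1 - (i : ℕ)) ?_ ?_ ?_ ?_
  · intro i hi
    simp only [Finset.mem_filter, Finset.mem_univ, true_and] at hi
    have hb := block_row_bounds hn hk hβ hl hanti hfb hi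
    simp only [Finset.mem_range]
    show pre' β r - 1 - (i : ℕ) < β r
    omega
  · intro a ha b hb hab
    simp only [Finset.mem_filter, Finset.mem_univ, true_and] at ha hb
    have ha2 := block_row_bounds hn hk hβ hl hanti hfb ha
    have hb2 := block_row_bounds hn hk hβ hl hanti hfb hb
    have hab' : pre' β r - 1 - (a : ℕ) = pre' β r - 1 - (b : ℕ) := hab
    exact Fin.ext (by omega)
  · intro j hj
    simp only [Finset.mem_range] at hj
    refine ⟨⟨pre' β r - 1 - j, by omega⟩, ?_, by simp only [Fin.val_mk]; omega⟩
    simp only [Finset.mem_filter, Finset.mem_univ, true_and]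
    apply (mem_rowblock_iff hn hk hβ hl hanti hfb).mpr
    simp only [Fin.val_mk]
    omega
  · intro i _; rfl

include hn hk hβ hβle hl hanti hfb in
lemma Q_lt (t : Fin ℓ → R) {r s : Fin ℓ} (hrs : r < s) :
    (∏ i : Fin k, ∏ c ∈ Finset.Icc 1 n,
      if colInBlock ℓ α (pivotCol k l i) r ∧ colInBlock ℓ α c s ∧
          c < pivotCol k l i ∧ ¬ isPivotCol k l c then
        qbr q (t r ^ q ^ (ixc n k ℓ α l s c + (betaPartial k ℓ α l r - ((i : ℕ) + 1))))
          (t s ^ q ^ (ixc n k ℓ α l s c + betaOf k ℓ α l r))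
      else 1)
    = ∏ j ∈ Finset.range (β r), ∏ m ∈ Finset.range (α s - β s),
        qbr q (t r ^ q ^ (m + j)) (t s ^ q ^ (m + β r)) := by
  have hNPcard := NP_card hn hk hβle hl hanti hfb s
  have hbp := betaPartial_eq (α := α) (l := l) hfb r
  have hbo := hfb r
  calc (∏ i : Fin k, ∏ c ∈ Finset.Icc 1 n,
      if colInBlock ℓ α (pivotCol k l i) r ∧ colInBlock ℓ α c s ∧
          c < pivotCol k l i ∧ ¬ isPivotCol k l c then
        qbr q (t r ^ q ^ (ixc n k ℓ α l s c + (betaPartial k ℓ α l r - ((i : ℕ) + 1))))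
          (t s ^ q ^ (ixc n k ℓ α l s c + betaOf k ℓ α l r))
      else 1)
      = ∏ i : Fin k, (if colInBlock ℓ α (pivotCol k l i) r then
          ∏ c ∈ NP n k ℓ α l s,
            qbr q (t r ^ q ^ (rk (NP n k ℓ α l s) c + (pre' β r - 1 - (i : ℕ))))
              (t s ^ q ^ (rk (NP n k ℓ α l s) c + β r))
        else 1) := by
        apply Finset.prod_congr rfl
        intro i _
        by_cases hP : colInBlock ℓ α (pivotCol k l i) r
        · rw [if_pos hP,
            show (∏ c ∈ NP n k ℓ α l s,
                qbr q (t r ^ q ^ (rk (NP n k ℓ α l s) c + (pre' β r - 1 - (i : ℕ))))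
                  (t s ^ q ^ (rk (NP n k ℓ α l s) c + β r)))
              = ∏ c ∈ Finset.Icc 1 n,
                  if colInBlock ℓ α c s ∧ ¬ isPivotCol k l c then
                    qbr q (t r ^ q ^ (rk (NP n k ℓ α l s) c + (pre' β r - 1 - (i : ℕ))))
                      (t s ^ q ^ (rk (NP n k ℓ α l s) c + β r))
                  else 1 from Finset.prod_filter _ _]
          apply Finset.prod_congr rfl
          intro c hc
          simp only [Finset.mem_Icc] at hc
          have hcond : (colInBlock ℓ α (pivotCol k l i) r ∧ colInBlock ℓ α c s ∧
              c < pivotCol k l i ∧ ¬ isPivotCol k l c)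
              ↔ (colInBlock ℓ α c s ∧ ¬ isPivotCol k l c) := by
            constructor
            · tauto
            · rintro ⟨h2, h3⟩
              refine ⟨hP, h2, ?_, h3⟩
              have h4 := suf_add_le (γ := α) hrs
              have h5 := hP.1
              have h6 := h2.2
              simp only [tailSum_eq_suf] at h5 h6
              omega
          rw [if_congr hcond rfl rfl]
          by_cases hW : colInBlock ℓ α c s ∧ ¬ isPivotCol k l c
          · rw [if_pos hW, if_pos hW,
              tpow_congr (t r) q (show ixc n k ℓ α l s c
                  + (betaPartial k ℓ α l r - ((i : ℕ) + 1))
                = rk (NP n k ℓ α l s) c + (pre' β r - 1 - (i : ℕ)) from by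
                  rw [ixc_eq_rk, hbp]; omega),
              tpow_congr (t s) q (show ixc n k ℓ α l s c + betaOf k ℓ α l r
                = rk (NP n k ℓ α l s) c + β r from by rw [ixc_eq_rk, hbo])]
          · rw [if_neg hW, if_neg hW]
        · rw [if_neg hP]
          apply Finset.prod_eq_one
          intro c _
          rw [if_neg (fun hcon => hP hcon.1)]
      _ = ∏ i ∈ Finset.univ.filter (fun i : Fin k => colInBlock ℓ α (pivotCol k l i) r),
            (fun j => ∏ m ∈ Finset.range (α s - β s),
              qbr q (t r ^ q ^ (m + j)) (t s ^ q ^ (m + β r))) (pre' β r - 1 - (i : ℕ)) := by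
        rw [Finset.prod_filter]
        apply Finset.prod_congr rfl
        intro i _
        by_cases hP : colInBlock ℓ α (pivotCol k l i) r
        · rw [if_pos hP, if_pos hP]
          have := prod_rank (NP n k ℓ α l s)
            (fun m => qbr q (t r ^ q ^ (m + (pre' β r - 1 - (i : ℕ))))
              (t s ^ q ^ (m + β r)))
          rw [hNPcard] at this
          exact this
        · rw [if_neg hP, if_neg hP]
      _ = ∏ j ∈ Finset.range (β r), ∏ m ∈ Finset.range (α s - β s),
            qbr q (t r ^ q ^ (m + j)) (t s ^ q ^ (m + β r)) := by
        exact prod_rowblock hn hk hβ hl hanti hfb r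
          (fun j => ∏ m ∈ Finset.range (α s - β s),
            qbr q (t r ^ q ^ (m + j)) (t s ^ q ^ (m + β r)))

include hn hk hβ hβle hl hanti hfb in
lemma Q_diag (t : Fin ℓ → R) (r : Fin ℓ) :
    (∏ i : Fin k, ∏ c ∈ Finset.Icc 1 n,
      if colInBlock ℓ α (pivotCol k l i) r ∧ colInBlock ℓ α c r ∧
          c < pivotCol k l i ∧ ¬ isPivotCol k l c then
        qbr q (t r ^ q ^ (ixc n k ℓ α l r c + (betaPartial k ℓ α l r - ((i : ℕ) + 1))))
          (t r ^ q ^ (ixc n k ℓ α l r c + betaOf k ℓ α l r))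
      else 1)
    = diagW q β r (toLoc n k ℓ α β l r) t := by
  have hbp := betaPartial_eq (α := α) (l := l) hfb r
  have hbo := hfb r
  have hpe := pre'_eq β r
  have hple : pre' β r ≤ k := by rw [← hβ]; exact pre'_le_total β r
  calc (∏ i : Fin k, ∏ c ∈ Finset.Icc 1 n,
      if colInBlock ℓ α (pivotCol k l i) r ∧ colInBlock ℓ α c r ∧
          c < pivotCol k l i ∧ ¬ isPivotCol k l c then
        qbr q (t r ^ q ^ (ixc n k ℓ α l r c + (betaPartial k ℓ α l r - ((i : ℕ) + 1))))
          (t r ^ q ^ (ixc n k ℓ α l r c + betaOf k ℓ α l r))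
      else 1)
      = ∏ i : Fin k, (if colInBlock ℓ α (pivotCol k l i) r then
          ∏ c ∈ NP n k ℓ α l r,
            (if c < pivotCol k l i then
              qbr q (t r ^ q ^ (rk (NP n k ℓ α l r) c + (pre' β r - 1 - (i : ℕ))))
                (t r ^ q ^ (rk (NP n k ℓ α l r) c + β r))
            else 1)
        else 1) := by
        apply Finset.prod_congr rfl
        intro i _
        by_cases hP : colInBlock ℓ α (pivotCol k l i) r
        · rw [if_pos hP,
            show (∏ c ∈ NP n k ℓ α l r,
                (if c < pivotCol k l i then
                  qbr q (t r ^ q ^ (rk (NP n k ℓ α l r) c + (pre' β r - 1 - (i : ℕ))))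
                    (t r ^ q ^ (rk (NP n k ℓ α l r) c + β r))
                else 1))
              = ∏ c ∈ Finset.Icc 1 n,
                  if colInBlock ℓ α c r ∧ ¬ isPivotCol k l c then
                    (if c < pivotCol k l i then
                      qbr q (t r ^ q ^ (rk (NP n k ℓ α l r) c + (pre' β r - 1 - (i : ℕ))))
                        (t r ^ q ^ (rk (NP n k ℓ α l r) c + β r))
                    else 1)
                  else 1 from Finset.prod_filter _ _]
          apply Finset.prod_congr rfl
          intro c _
          have hcond : (colInBlock ℓ α (pivotCol k l i) r ∧ colInBlock ℓ α c r ∧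
              c < pivotCol k l i ∧ ¬ isPivotCol k l c)
              ↔ ((colInBlock ℓ α c r ∧ ¬ isPivotCol k l c) ∧ c < pivotCol k l i) := by
            tauto
          rw [if_congr hcond rfl rfl]
          by_cases hW : colInBlock ℓ α c r ∧ ¬ isPivotCol k l c
          · by_cases hlt : c < pivotCol k l i
            · rw [if_pos ⟨hW, hlt⟩, if_pos hW, if_pos hlt,
                tpow_congr (t r) q (show ixc n k ℓ α l r c
                    + (betaPartial k ℓ α l r - ((i : ℕ) + 1))
                  = rk (NP n k ℓ α l r) c + (pre' β r - 1 - (i : ℕ)) from by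
                    rw [ixc_eq_rk, hbp]; omega),
                tpow_congr (t r) q (show ixc n k ℓ α l r c + betaOf k ℓ α l r
                  = rk (NP n k ℓ α l r) c + β r from by rw [ixc_eq_rk, hbo])]
            · rw [if_neg (fun hcon => hlt hcon.2), if_pos hW, if_neg hlt]
          · rw [if_neg (fun hcon => hW hcon.1), if_neg hW]
        · rw [if_neg hP]
          apply Finset.prod_eq_one
          intro c _
          rw [if_neg (fun hcon => hP hcon.1)]
      _ = ∏ i ∈ Finset.univ.filter (fun i : Fin k => colInBlock ℓ α (pivotCol k l i) r),
            (fun j => ∏ m ∈ Finset.range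
                (if h : pre' β r - 1 - j < k then
                  l ⟨pre' β r - 1 - j, h⟩ - suf (fun r' => α r' - β r') r
                else 0),
              qbr q (t r ^ q ^ (m + j)) (t r ^ q ^ (m + β r))) (pre' β r - 1 - (i : ℕ)) := by
        rw [Finset.prod_filter]
        apply Finset.prod_congr rfl
        intro i _
        by_cases hP : colInBlock ℓ α (pivotCol k l i) r
        · rw [if_pos hP, if_pos hP]
          have hsb := stars_below_card hn hk hβ hβle hl hanti hfb hP
          have hrow := block_row_bounds hn hk hβ hl hanti hfb hP
          have hidx : pre' β r - 1 - (pre' β r - 1 - (i : ℕ)) = (i : ℕ) := by omega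
          have hik : pre' β r - 1 - (pre' β r - 1 - (i : ℕ)) < k := by
            rw [hidx]; exact i.isLt
          have hstep := prod_rank_ite (NP n k ℓ α l r)
            (fun m => qbr q (t r ^ q ^ (m + (pre' β r - 1 - (i : ℕ))))
              (t r ^ q ^ (m + β r))) (pivotCol k l i)
          rw [hstep]
          beta_reduce
          rw [dif_pos hik,
            show (⟨pre' β r - 1 - (pre' β r - 1 - (i : ℕ)), hik⟩ : Fin k) = i from
              Fin.ext hidx]
          have hcd : (Finset.filter (fun x => x < pivotCol k l i) (NP n k ℓ α l r)).card
              = l i - suf (fun r' => α r' - β r') r := by omega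
          rw [hcd]
        · rw [if_neg hP, if_neg hP]
      _ = ∏ j ∈ Finset.range (β r),
            (fun j => ∏ m ∈ Finset.range
                (if h : pre' β r - 1 - j < k then
                  l ⟨pre' β r - 1 - j, h⟩ - suf (fun r' => α r' - β r') r
                else 0),
              qbr q (t r ^ q ^ (m + j)) (t r ^ q ^ (m + β r))) j := by
        exact prod_rowblock hn hk hβ hl hanti hfb r
          (fun j => ∏ m ∈ Finset.range
              (if h : pre' β r - 1 - j < k then
                l ⟨pre' β r - 1 - j, h⟩ - suf (fun r' => α r' - β r') r
              else 0),
            qbr q (t r ^ q ^ (m + j)) (t r ^ q ^ (m + β r)))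
      _ = diagW q β r (toLoc n k ℓ α β l r) t := by
        unfold diagW toLoc
        rw [← Fin.prod_univ_eq_prod_range]

include hβle in
lemma Q_far (t : Fin ℓ → R) {r s : Fin ℓ} (hsr : s < r) :
    (∏ i : Fin k, ∏ c ∈ Finset.Icc 1 n,
      if colInBlock ℓ α (pivotCol k l i) r ∧ colInBlock ℓ α c s ∧
          c < pivotCol k l i ∧ ¬ isPivotCol k l c then
        qbr q (t r ^ q ^ (ixc n k ℓ α l s c + (betaPartial k ℓ α l r - ((i : ℕ) + 1))))
          (t s ^ q ^ (ixc n k ℓ α l s c + betaOf k ℓ α l r))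
      else 1) = 1 := by
  apply Finset.prod_eq_one
  intro i _
  apply Finset.prod_eq_one
  intro c _
  rw [if_neg]
  rintro ⟨h1, h2, h3, _⟩
  have h4 := suf_add_le (γ := α) hsr
  have h5 := h1.2
  have h6 := h2.1
  simp only [tailSum_eq_suf] at h5 h6
  omega

include hn hk hβ hβle hl hanti hfb in
lemma wt_eq (t : Fin ℓ → R) :
    wt q n k ℓ α l t
      = offDiag q α β t * ∏ r : Fin ℓ, diagW q β r (toLoc n k ℓ α β l r) t := by
  unfold wt offDiag
  calc (∏ r : Fin ℓ, ∏ s : Fin ℓ, ∏ i : Fin k, ∏ c ∈ Finset.Icc 1 n,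
      if colInBlock ℓ α (pivotCol k l i) r ∧ colInBlock ℓ α c s ∧
          c < pivotCol k l i ∧ ¬ isPivotCol k l c then
        qbr q (t r ^ q ^ (ixc n k ℓ α l s c + (betaPartial k ℓ α l r - ((i : ℕ) + 1))))
          (t s ^ q ^ (ixc n k ℓ α l s c + betaOf k ℓ α l r))
      else 1)
      = ∏ r : Fin ℓ, ∏ s : Fin ℓ,
          ((if r < s then
            ∏ j ∈ Finset.range (β r), ∏ m ∈ Finset.range (α s - β s),
              qbr q (t r ^ q ^ (m + j)) (t s ^ q ^ (m + β r))
          else 1) *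
          (if r = s then diagW q β r (toLoc n k ℓ α β l r) t else 1)) := by
        apply Finset.prod_congr rfl
        intro r _
        apply Finset.prod_congr rfl
        intro s _
        rcases lt_trichotomy r s with h | h | h
        · rw [if_pos h, if_neg (ne_of_lt h), mul_one,
            Q_lt hn hk hβ hβle hl hanti hfb t h]
        · subst h
          rw [if_neg (lt_irrefl r), if_pos rfl, one_mul,
            Q_diag hn hk hβ hβle hl hanti hfb t r]
        · rw [if_neg (not_lt_of_gt h), if_neg (Ne.symm (ne_of_lt h)), mul_one,
            Q_far hβle t h]
      _ = (∏ r : Fin ℓ, ∏ s : Fin ℓ,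
            if r < s then
              ∏ j ∈ Finset.range (β r), ∏ m ∈ Finset.range (α s - β s),
                qbr q (t r ^ q ^ (m + j)) (t s ^ q ^ (m + β r))
            else 1) *
          ∏ r : Fin ℓ, ∏ s : Fin ℓ,
            (if r = s then diagW q β r (toLoc n k ℓ α β l r) t else 1) := by
        rw [← Finset.prod_mul_distrib]
        apply Finset.prod_congr rfl
        intro r _
        rw [← Finset.prod_mul_distrib]
      _ = (∏ r : Fin ℓ, ∏ s : Fin ℓ,
            if r < s then
              ∏ j ∈ Finset.range (β r), ∏ m ∈ Finset.range (α s - β s),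
                qbr q (t r ^ q ^ (m + j)) (t s ^ q ^ (m + β r))
            else 1) *
          ∏ r : Fin ℓ, diagW q β r (toLoc n k ℓ α β l r) t := by
        congr 1
        apply Finset.prod_congr rfl
        intro r _
        rw [Finset.prod_ite_eq]
        simp

end WithF3
end WtFact

section Assemble

variable {q n k ℓ : ℕ} {α β : Fin ℓ → ℕ}

/-- reconstruction of the partition from local data -/
def fromLocVal (k ℓ : ℕ) (α β : Fin ℓ → ℕ) (g : ∀ r : Fin ℓ, Fin (β r) → ℕ) (i : Fin k) : ℕ :=
  ∑ r : Fin ℓ, if h : pre β r ≤ (i : ℕ) ∧ (i : ℕ) < pre' β r then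
      g r ⟨pre' β r - 1 - (i : ℕ), by have := pre'_eq β r; omega⟩
        + suf (fun r' => α r' - β r') r
    else 0

lemma mem_monoSeqs {β0 e : ℕ} {g : Fin β0 → ℕ} :
    g ∈ monoSeqs β0 0 e ↔ (∀ j, g j ≤ e) ∧ Monotone g := by
  unfold monoSeqs
  simp only [Finset.mem_filter, Fintype.mem_piFinset, Finset.mem_Icc, Nat.zero_le, true_and]

lemma exists_rowblock (hβ : ∑ r, β r = k) (i : Fin k) :
    ∃ r, pre β r ≤ (i : ℕ) ∧ (i : ℕ) < pre' β r :=
  exists_block_pre β i (by rw [hβ]; exact i.isLt)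

lemma fromLocVal_eq (g : ∀ r : Fin ℓ, Fin (β r) → ℕ) {i : Fin k} {r : Fin ℓ}
    (hr : pre β r ≤ (i : ℕ) ∧ (i : ℕ) < pre' β r) :
    fromLocVal k ℓ α β g i
      = g r ⟨pre' β r - 1 - (i : ℕ), by have := pre'_eq β r; omega⟩
        + suf (fun r' => α r' - β r') r := by
  unfold fromLocVal
  rw [Finset.sum_eq_single_of_mem r (Finset.mem_univ r)]
  · rw [dif_pos hr]
  · intro r' _ hne
    rw [dif_neg]
    intro hcon
    exact hne (block_pre_unique hcon hr)

lemma sum_diff_eq (hn : ∑ r, α r = n) (hk : k ≤ n) (hβ : ∑ r, β r = k)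
    (hβle : ∀ r, β r ≤ α r) :
    ∑ r', (α r' - β r') = n - k := by
  have h4 : ∑ r', ((α r' - β r') + β r') = ∑ r', α r' :=
    Finset.sum_congr rfl fun r' _ => by have := hβle r'; omega
  rw [Finset.sum_add_distrib] at h4
  omega

lemma fromLocVal_le (hn : ∑ r, α r = n) (hk : k ≤ n) (hβ : ∑ r, β r = k)
    (hβle : ∀ r, β r ≤ α r) (g : ∀ r : Fin ℓ, Fin (β r) → ℕ)
    (hg : ∀ r j, g r j ≤ α r - β r) (i : Fin k) :
    fromLocVal k ℓ α β g i ≤ n - k := by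
  obtain ⟨r, hr⟩ := exists_rowblock hβ i
  rw [fromLocVal_eq g hr]
  have h1 := hg r ⟨pre' β r - 1 - (i : ℕ), by have := pre'_eq β r; omega⟩
  have h2 := suf_add_self_le_total (fun r' => α r' - β r') r
  have h3 := sum_diff_eq hn hk hβ hβle
  omega

lemma fromLoc_colInBlock (hβ : ∑ r, β r = k) (hβle : ∀ r, β r ≤ α r)
    (g : ∀ r : Fin ℓ, Fin (β r) → ℕ) (hg : ∀ r j, g r j ≤ α r - β r)
    {i : Fin k} {r : Fin ℓ} (hr : pre β r ≤ (i : ℕ) ∧ (i : ℕ) < pre' β r) :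
    colInBlock ℓ α (pivotCol k (fromLocVal k ℓ α β g) i) r := by
  have hsp := suf_pre'_eq hβle hβ r
  have hgle := hg r ⟨pre' β r - 1 - (i : ℕ), by have := pre'_eq β r; omega⟩
  have hik := i.isLt
  have hpe := pre'_eq β r
  have hple : pre' β r ≤ k := by rw [← hβ]; exact pre'_le_total β r
  have hβa := hβle r
  constructor
  · show tailSum ℓ α r < pivotCol k (fromLocVal k ℓ α β g) i
    rw [tailSum_eq_suf]
    unfold pivotCol
    rw [fromLocVal_eq g hr]
    omega
  · show pivotCol k (fromLocVal k ℓ α β g) i ≤ tailSum ℓ α r + α r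
    rw [tailSum_eq_suf]
    unfold pivotCol
    rw [fromLocVal_eq g hr]
    omega

lemma fromLoc_betaOf (hβ : ∑ r, β r = k) (hβle : ∀ r, β r ≤ α r)
    (g : ∀ r : Fin ℓ, Fin (β r) → ℕ) (hg : ∀ r j, g r j ≤ α r - β r) (r : Fin ℓ) :
    betaOf k ℓ α (fromLocVal k ℓ α β g) r = β r := by
  rw [← fiber_card]
  have hiff : ∀ i : Fin k,
      colInBlock ℓ α (pivotCol k (fromLocVal k ℓ α β g) i) r
        ↔ (pre β r ≤ (i : ℕ) ∧ (i : ℕ) < pre' β r) := by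
    intro i
    constructor
    · intro hcol
      obtain ⟨r₀, hr₀⟩ := exists_rowblock hβ i
      have hcol₀ := fromLoc_colInBlock hβ hβle g hg hr₀
      have heq : r = r₀ := block_suf_unique ⟨hcol.1, hcol.2⟩ ⟨hcol₀.1, hcol₀.2⟩
      rw [heq]
      exact hr₀
    · exact fromLoc_colInBlock hβ hβle g hg
  have hfe : Finset.univ.filter
        (fun i : Fin k => colInBlock ℓ α (pivotCol k (fromLocVal k ℓ α β g) i) r)
      = Finset.univ.filter
        (fun i : Fin k => pre β r ≤ (i : ℕ) ∧ (i : ℕ) < pre' β r) :=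
    Finset.filter_congr (fun i _ => hiff i)
  rw [hfe, card_fin_interval k (pre β r) (pre' β r) (by rw [← hβ]; exact pre'_le_total β r)]
  have := pre'_eq β r
  omega

lemma fromLoc_anti (hβ : ∑ r, β r = k) (hβle : ∀ r, β r ≤ α r)
    (g : ∀ r : Fin ℓ, Fin (β r) → ℕ) (hg : ∀ r j, g r j ≤ α r - β r)
    (hgm : ∀ r, Monotone (g r)) (i j : Fin k) (hij : i ≤ j) :
    fromLocVal k ℓ α β g j ≤ fromLocVal k ℓ α β g i := by
  obtain ⟨r, hr⟩ := exists_rowblock hβ i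
  obtain ⟨r', hr'⟩ := exists_rowblock hβ j
  have hij' : (i : ℕ) ≤ (j : ℕ) := hij
  rw [fromLocVal_eq g hr, fromLocVal_eq g hr']
  rcases lt_trichotomy r r' with h | h | h
  · have h1 : suf (fun r'' => α r'' - β r'') r' + (α r' - β r')
        ≤ suf (fun r'' => α r'' - β r'') r := suf_add_le (γ := fun r'' => α r'' - β r'') h
    have h2 := hg r' ⟨pre' β r' - 1 - (j : ℕ), by have := pre'_eq β r'; omega⟩
    omega
  · subst h
    have hmono := hgm r (show (⟨pre' β r - 1 - (j : ℕ), by have := pre'_eq β r; omega⟩ :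
        Fin (β r)) ≤ ⟨pre' β r - 1 - (i : ℕ), by have := pre'_eq β r; omega⟩ from by
      rw [Fin.mk_le_mk]; omega)
    omega
  · exfalso
    have := pre'_le_pre (γ := β) h
    omega

end Assemble

set_option maxHeartbeats 2000000 in
open MvPolynomial in
/-- The factorization of `Σ_{λ : β(λ)=β} wt(λ;α,k)` in `ℤ[t_1,…,t_ℓ]`, with the
denominators `∏_r ∏_{i<β_r} (t_r^{q^{β_r}} - t_r^{q^i})` cleared. -/
theorem schubert_union_weight_factorization
    (hq : ∃ p m : ℕ, p.Prime ∧ 0 < m ∧ q = p ^ m)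
    (hαpos : ∀ r, 0 < α r) (hn : ∑ r, α r = n) (hk : k ≤ n)
    (β : Fin ℓ → ℕ) (hβ : ∑ r, β r = k) (hβle : ∀ r, β r ≤ α r) :
    (∑ f ∈ (boxPartitions n k).filter
        (fun f => ∀ r, betaOf k ℓ α (fun i => ((f i : ℕ))) r = β r),
      wt q n k ℓ α (fun i => ((f i : ℕ))) (fun r => (X r : MvPolynomial (Fin ℓ) ℤ))) *
      (∏ r : Fin ℓ, ∏ i ∈ Finset.range (β r),
        ((X r : MvPolynomial (Fin ℓ) ℤ) ^ q ^ (β r) - (X r) ^ q ^ i)) =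
    (∏ r : Fin ℓ, ∏ i ∈ Finset.range (β r),
        ((X r : MvPolynomial (Fin ℓ) ℤ) ^ q ^ (α r) - (X r) ^ q ^ i)) *
      ∏ r : Fin ℓ, ∏ s : Fin ℓ,
        if r < s then
          ∏ j ∈ Finset.range (β r), ∏ i ∈ Finset.range (α s - β s),
            qbr q ((X r : MvPolynomial (Fin ℓ) ℤ) ^ q ^ (i + j))
              ((X s) ^ q ^ (i + β r))
        else 1 := by
  classical
  rw [Finset.sum_mul]
  have hstep1 : ∀ f ∈ (boxPartitions n k).filter
      (fun f => ∀ r, betaOf k ℓ α (fun i => ((f i : ℕ))) r = β r),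
      wt q n k ℓ α (fun i => ((f i : ℕ))) (fun r => (X r : MvPolynomial (Fin ℓ) ℤ)) *
        (∏ r : Fin ℓ, ∏ i ∈ Finset.range (β r),
          ((X r : MvPolynomial (Fin ℓ) ℤ) ^ q ^ (β r) - (X r) ^ q ^ i))
      = offDiag q α β (fun r => (X r : MvPolynomial (Fin ℓ) ℤ)) *
          ∏ r : Fin ℓ,
            (diagW q β r (toLoc n k ℓ α β (fun i => ((f i : ℕ))) r)
                (fun r => (X r : MvPolynomial (Fin ℓ) ℤ)) *
              ∏ i ∈ Finset.range (β r),
                ((X r : MvPolynomial (Fin ℓ) ℤ) ^ q ^ (β r) - (X r) ^ q ^ i)) := by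
    intro f hf
    rw [Finset.mem_filter] at hf
    obtain ⟨hf1, hfb⟩ := hf
    simp only [boxPartitions, Finset.mem_filter, Finset.mem_univ, true_and] at hf1
    have hl : ∀ i, ((f i : ℕ)) ≤ n - k := fun i => Nat.lt_succ_iff.mp (f i).isLt
    have hanti : ∀ i j : Fin k, i ≤ j → ((f j : ℕ)) ≤ ((f i : ℕ)) :=
      fun i j hij => hf1 i j hij
    rw [wt_eq hn hk hβ hβle hl hanti hfb, mul_assoc, ← Finset.prod_mul_distrib]
  rw [show (∑ f ∈ (boxPartitions n k).filter
        (fun f => ∀ r, betaOf k ℓ α (fun i => ((f i : ℕ))) r = β r),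
      wt q n k ℓ α (fun i => ((f i : ℕ))) (fun r => (X r : MvPolynomial (Fin ℓ) ℤ)) *
        (∏ r : Fin ℓ, ∏ i ∈ Finset.range (β r),
          ((X r : MvPolynomial (Fin ℓ) ℤ) ^ q ^ (β r) - (X r) ^ q ^ i)))
      = ∑ f ∈ (boxPartitions n k).filter
          (fun f => ∀ r, betaOf k ℓ α (fun i => ((f i : ℕ))) r = β r),
        (offDiag q α β (fun r => (X r : MvPolynomial (Fin ℓ) ℤ)) *
          ∏ r : Fin ℓ,
            (diagW q β r (toLoc n k ℓ α β (fun i => ((f i : ℕ))) r)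
                (fun r => (X r : MvPolynomial (Fin ℓ) ℤ)) *
              ∏ i ∈ Finset.range (β r),
                ((X r : MvPolynomial (Fin ℓ) ℤ) ^ q ^ (β r) - (X r) ^ q ^ i)))
    from Finset.sum_congr rfl hstep1, ← Finset.mul_sum]
  have hbij : (∑ f ∈ (boxPartitions n k).filter
        (fun f => ∀ r, betaOf k ℓ α (fun i => ((f i : ℕ))) r = β r),
      ∏ r : Fin ℓ,
        (diagW q β r (toLoc n k ℓ α β (fun i => ((f i : ℕ))) r)
            (fun r => (X r : MvPolynomial (Fin ℓ) ℤ)) *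
          ∏ i ∈ Finset.range (β r),
            ((X r : MvPolynomial (Fin ℓ) ℤ) ^ q ^ (β r) - (X r) ^ q ^ i)))
      = ∑ g ∈ Fintype.piFinset (fun r => monoSeqs (β r) 0 (α r - β r)),
          ∏ r : Fin ℓ,
            (diagW q β r (g r) (fun r => (X r : MvPolynomial (Fin ℓ) ℤ)) *
              ∏ i ∈ Finset.range (β r),
                ((X r : MvPolynomial (Fin ℓ) ℤ) ^ q ^ (β r) - (X r) ^ q ^ i)) := by
    apply Finset.sum_bij'
      (i := fun f _ => fun r => toLoc n k ℓ α β (fun i => ((f i : ℕ))) r)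
      (j := fun g hg => fun i0 =>
        (⟨fromLocVal k ℓ α β g i0, by
          have hg' : ∀ r j, g r j ≤ α r - β r := fun r j =>
            (mem_monoSeqs.mp (Fintype.mem_piFinset.mp hg r)).1 j
          exact Nat.lt_succ_of_le (fromLocVal_le hn hk hβ hβle g hg' i0)⟩ :
          Fin (n - k + 1)))
    case hi =>
      intro f hf
      rw [Finset.mem_filter] at hf
      obtain ⟨hf1, hfb⟩ := hf
      simp only [boxPartitions, Finset.mem_filter, Finset.mem_univ, true_and] at hf1
      have hl : ∀ i, ((f i : ℕ)) ≤ n - k := fun i => Nat.lt_succ_iff.mp (f i).isLt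
      have hanti : ∀ i j : Fin k, i ≤ j → ((f j : ℕ)) ≤ ((f i : ℕ)) :=
        fun i j hij => hf1 i j hij
      apply Fintype.mem_piFinset.mpr
      intro r
      have hpe := pre'_eq β r
      have hple : pre' β r ≤ k := by rw [← hβ]; exact pre'_le_total β r
      apply mem_monoSeqs.mpr
      constructor
      · intro j
        have hjlt := j.isLt
        have hcond : pre' β r - 1 - (j : ℕ) < k := by omega
        unfold toLoc
        rw [dif_pos hcond]
        beta_reduce
        have hrow : pre β r ≤ ((⟨pre' β r - 1 - (j : ℕ), hcond⟩ : Fin k) : ℕ)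
            ∧ ((⟨pre' β r - 1 - (j : ℕ), hcond⟩ : Fin k) : ℕ) < pre' β r := by
          simp only [Fin.val_mk]
          omega
        have hcol := (mem_rowblock_iff hn hk hβ hl hanti hfb).mpr hrow
        have hsb := stars_below_card hn hk hβ hβle hl hanti hfb hcol
        have hub := stars_below_le hn hk hβ hβle hl hanti hfb hcol
        omega
      · intro j j' hjj'
        have hjlt := j.isLt
        have hjlt' := j'.isLt
        have hjj : (j : ℕ) ≤ (j' : ℕ) := hjj'
        have hcond : pre' β r - 1 - (j : ℕ) < k := by omega
        have hcond' : pre' β r - 1 - (j' : ℕ) < k := by omega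
        unfold toLoc
        rw [dif_pos hcond, dif_pos hcond']
        apply Nat.sub_le_sub_right
        apply hanti
        rw [Fin.mk_le_mk]
        omega
    case hj =>
      intro g hg
      have hg' : ∀ r j, g r j ≤ α r - β r := fun r j =>
        (mem_monoSeqs.mp (Fintype.mem_piFinset.mp hg r)).1 j
      have hgm : ∀ r, Monotone (g r) := fun r =>
        (mem_monoSeqs.mp (Fintype.mem_piFinset.mp hg r)).2
      refine Finset.mem_filter.mpr ⟨?_, ?_⟩
      · simp only [boxPartitions, Finset.mem_filter, Finset.mem_univ, true_and]
        intro i j hij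
        exact Fin.mk_le_mk.mpr (fromLoc_anti hβ hβle g hg' hgm i j hij)
      · intro r
        exact fromLoc_betaOf hβ hβle g hg' r
    case left_neg =>
      intro f hf
      rw [Finset.mem_filter] at hf
      obtain ⟨hf1, hfb⟩ := hf
      simp only [boxPartitions, Finset.mem_filter, Finset.mem_univ, true_and] at hf1
      have hl : ∀ i, ((f i : ℕ)) ≤ n - k := fun i => Nat.lt_succ_iff.mp (f i).isLt
      have hanti : ∀ i j : Fin k, i ≤ j → ((f j : ℕ)) ≤ ((f i : ℕ)) :=
        fun i j hij => hf1 i j hij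
      funext i0
      apply Fin.ext
      show fromLocVal k ℓ α β (fun r => toLoc n k ℓ α β (fun i => ((f i : ℕ))) r) i0
        = ((f i0 : ℕ))
      obtain ⟨r₀, hr₀⟩ := exists_rowblock hβ i0
      rw [fromLocVal_eq _ hr₀]
      have hpe := pre'_eq β r₀
      have hple : pre' β r₀ ≤ k := by rw [← hβ]; exact pre'_le_total β r₀
      have hi0 := i0.isLt
      unfold toLoc
      have hcc : pre' β r₀ - 1 -
          ((⟨pre' β r₀ - 1 - (i0 : ℕ), by have := pre'_eq β r₀; omega⟩ : Fin (β r₀)) : ℕ) < k := by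
        simp only [Fin.val_mk]
        omega
      rw [dif_pos hcc]
      have hmk : (⟨pre' β r₀ - 1 -
          ((⟨pre' β r₀ - 1 - (i0 : ℕ), by have := pre'_eq β r₀; omega⟩ : Fin (β r₀)) : ℕ),
            hcc⟩ : Fin k) = i0 := by
        apply Fin.ext
        simp only [Fin.val_mk]
        omega
      rw [hmk]
      beta_reduce
      have hcol := (mem_rowblock_iff hn hk hβ hl hanti hfb).mpr hr₀
      have hsb := stars_below_card hn hk hβ hβle hl hanti hfb hcol
      omega
    case right_neg =>
      intro g hg
      have hg' : ∀ r j, g r j ≤ α r - β r := fun r j =>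
        (mem_monoSeqs.mp (Fintype.mem_piFinset.mp hg r)).1 j
      funext r
      funext j
      have hjlt := j.isLt
      have hpe := pre'_eq β r
      have hple : pre' β r ≤ k := by rw [← hβ]; exact pre'_le_total β r
      have hcond : pre' β r - 1 - (j : ℕ) < k := by omega
      unfold toLoc
      rw [dif_pos hcond]
      show fromLocVal k ℓ α β g ⟨pre' β r - 1 - (j : ℕ), hcond⟩
          - suf (fun r' => α r' - β r') r = g r j
      have hrr : pre β r ≤ ((⟨pre' β r - 1 - (j : ℕ), hcond⟩ : Fin k) : ℕ)
          ∧ ((⟨pre' β r - 1 - (j : ℕ), hcond⟩ : Fin k) : ℕ) < pre' β r := by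
        simp only [Fin.val_mk]
        omega
      rw [fromLocVal_eq g hrr]
      have hmk2 : (⟨pre' β r - 1 - ((⟨pre' β r - 1 - (j : ℕ), hcond⟩ : Fin k) : ℕ), by
          have := pre'_eq β r; omega⟩ : Fin (β r)) = j := by
        apply Fin.ext
        simp only [Fin.val_mk]
        omega
      rw [hmk2]
      omega
    case h =>
      intro f hf
      rfl
  rw [hbij,
    show (∑ g ∈ Fintype.piFinset (fun r => monoSeqs (β r) 0 (α r - β r)),
        ∏ r : Fin ℓ,
          (diagW q β r (g r) (fun r => (X r : MvPolynomial (Fin ℓ) ℤ)) *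
            ∏ i ∈ Finset.range (β r),
              ((X r : MvPolynomial (Fin ℓ) ℤ) ^ q ^ (β r) - (X r) ^ q ^ i)))
      = ∏ r : Fin ℓ, ∑ μ ∈ monoSeqs (β r) 0 (α r - β r),
          (diagW q β r μ (fun r => (X r : MvPolynomial (Fin ℓ) ℤ)) *
            ∏ i ∈ Finset.range (β r),
              ((X r : MvPolynomial (Fin ℓ) ℤ) ^ q ^ (β r) - (X r) ^ q ^ i))
    from (Finset.prod_univ_sum (fun r => monoSeqs (β r) 0 (α r - β r))
      (fun r μ => (diagW q β r μ (fun r => (X r : MvPolynomial (Fin ℓ) ℤ))) *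
        ∏ i ∈ Finset.range (β r),
          ((X r : MvPolynomial (Fin ℓ) ℤ) ^ q ^ (β r) - (X r) ^ q ^ i))).symm]
  have hblock : ∀ r : Fin ℓ,
      (∑ μ ∈ monoSeqs (β r) 0 (α r - β r),
        (diagW q β r μ (fun r => (X r : MvPolynomial (Fin ℓ) ℤ)) *
          ∏ i ∈ Finset.range (β r),
            ((X r : MvPolynomial (Fin ℓ) ℤ) ^ q ^ (β r) - (X r) ^ q ^ i)))
      = ∏ i ∈ Finset.range (β r),
          ((X r : MvPolynomial (Fin ℓ) ℤ) ^ q ^ (α r) - (X r) ^ q ^ i) := by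
    intro r
    rw [← Finset.sum_mul]
    have hpb := per_block q (X r : MvPolynomial (Fin ℓ) ℤ) (β r) (α r - β r)
    rw [show (α r - β r) + β r = α r from by have := hβle r; omega] at hpb
    exact hpb
  rw [show (∏ r : Fin ℓ, ∑ μ ∈ monoSeqs (β r) 0 (α r - β r),
        (diagW q β r μ (fun r => (X r : MvPolynomial (Fin ℓ) ℤ)) *
          ∏ i ∈ Finset.range (β r),
            ((X r : MvPolynomial (Fin ℓ) ℤ) ^ q ^ (β r) - (X r) ^ q ^ i)))
      = ∏ r : Fin ℓ, ∏ i ∈ Finset.range (β r),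
          ((X r : MvPolynomial (Fin ℓ) ℤ) ^ q ^ (α r) - (X r) ^ q ^ i)
    from Finset.prod_congr rfl fun r _ => hblock r]
  rw [mul_comm]
  rfl


end CSP
end
end

section
/- Let w ∈ W^β (i.e., w ∈ S_n is increasing on each block B_k of β), and suppose (i,j) is a 'star position' of w, meaning i < w^{−1}(j) and w(i) > j, with w(i) ∈ A_r and j ∈ A_s where r > s. Then: (i) for every i' with i' in the same block B_k as i and w(i') ∈ A_r, the pair (i',j) is also a star position, i.e., i' < w^{−1}(j) and w(i') > j; and (ii) for every j' ∈ A_s with w^{−1}(j') in the same block B_k as w^{−1}(j), the pair (i,j') is also a star position, i.e., i < w^{−1}(j') and w(i) > j'. -/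
/-!
Lemma on star positions of a minimal-length coset representative `w ∈ W^β`
(Lemma "BlockForm" (d)): stars propagate along row blocks and column blocks.
-/

open scoped Classical

noncomputable section

namespace CSP

variable {n ℓ m : ℕ}

/-- `x` (a `0`-indexed position) lies in the block `A_r` of the composition `α`
(blocks labeled from left to right). -/
def memBlock (γ : Fin ℓ → ℕ) (x : Fin n) (r : Fin ℓ) : Prop :=
  (∑ r' ∈ Finset.univ.filter (fun r' => r' < r), γ r') ≤ (x : ℕ) ∧
    (x : ℕ) < (∑ r' ∈ Finset.univ.filter (fun r' => r' < r), γ r') + γ r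


lemma memBlock_lt {γ : Fin ℓ → ℕ} {x y : Fin n} {s r : Fin ℓ}
    (hsr : s < r) (hx : memBlock γ x s) (hy : memBlock γ y r) : x < y := by
  have hsub : insert s (Finset.univ.filter (fun r' => r' < s)) ⊆
      Finset.univ.filter (fun r' => r' < r) := by
    intro a ha
    simp only [Finset.mem_insert, Finset.mem_filter, Finset.mem_univ, true_and] at ha ⊢
    rcases ha with rfl | h
    · exact hsr
    · exact h.trans hsr
  have hsum : (∑ r' ∈ Finset.univ.filter (fun r' => r' < s), γ r') + γ s ≤
      ∑ r' ∈ Finset.univ.filter (fun r' => r' < r), γ r' := by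
    have h2 := Finset.sum_le_sum_of_subset (f := γ) hsub
    rwa [Finset.sum_insert (by simp), add_comm] at h2
  have hxy : (x : ℕ) < (y : ℕ) := lt_of_lt_of_le hx.2 (le_trans hsum hy.1)
  exact hxy

lemma memBlock_of_between {γ : Fin m → ℕ} {x y z : Fin n} {k : Fin m}
    (hx : memBlock γ x k) (hy : memBlock γ y k) (hxz : x ≤ z) (hzy : z ≤ y) :
    memBlock γ z k :=
  ⟨le_trans hx.1 hxz, lt_of_le_of_lt hzy hy.2⟩

/-- **Star positions propagate along blocks.** Let `w ∈ W^β` (increasing on every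
block of `β`) and let `(i,j)` be a star position (`i < w⁻¹(j)`, `w(i) > j`) with
`w(i) ∈ A_r`, `j ∈ A_s`, `r > s`. Then every `i'` in the same `β`-block as `i` with
`w(i') ∈ A_r` gives a star position `(i',j)`, and every `j' ∈ A_s` with `w⁻¹(j')` in
the same `β`-block as `w⁻¹(j)` gives a star position `(i,j')`. -/
theorem star_positions_propagate
    (α : Fin ℓ → ℕ) (β : Fin m → ℕ)
    (hαpos : ∀ r, 0 < α r) (hα : ∑ r, α r = n)
    (hβpos : ∀ k, 0 < β k) (hβ : ∑ k, β k = n)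
    (w : Equiv.Perm (Fin n))
    (hw : ∀ (k : Fin m) (x y : Fin n),
      memBlock β x k → memBlock β y k → x < y → w x < w y)
    (i j : Fin n) (r s : Fin ℓ) (hrs : s < r)
    (hwi : memBlock α (w i) r) (hj : memBlock α j s)
    (hstar : i < w.symm j ∧ j < w i) :
    (∀ (k : Fin m) (i' : Fin n),
      memBlock β i k → memBlock β i' k → memBlock α (w i') r →
        i' < w.symm j ∧ j < w i') ∧
    (∀ (k : Fin m) (j' : Fin n),
      memBlock α j' s → memBlock β (w.symm j) k → memBlock β (w.symm j') k →
        i < w.symm j' ∧ j' < w i) := by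
  obtain ⟨hij, hji⟩ := hstar
  constructor
  · intro k i' hik hi'k hwi'
    have hji' : j < w i' := memBlock_lt hrs hj hwi'
    refine ⟨?_, hji'⟩
    by_contra hcon
    push_neg at hcon
    have hmem : memBlock β (w.symm j) k := memBlock_of_between hik hi'k hij.le hcon
    have hlt := hw k i (w.symm j) hik hmem hij
    rw [Equiv.apply_symm_apply] at hlt
    exact lt_asymm hji hlt
  · intro k j' hj' hjk hj'k
    have hj'wi : j' < w i := memBlock_lt hrs hj' hwi
    refine ⟨?_, hj'wi⟩
    by_contra hcon
    push_neg at hcon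
    have hmem : memBlock β i k := memBlock_of_between hj'k hjk hcon hij.le
    have hlt := hw k i (w.symm j) hmem hjk hij
    rw [Equiv.apply_symm_apply] at hlt
    exact lt_asymm hji hlt

end CSP
end
end

section
/- For every composition α = (α_1,…,α_ℓ) of n and every composition β = (β_1,…,β_m) of n, the Gaussian multinomial coefficient satisfies the generalized q-Vandermonde identity: [n; β_1,…,β_m]_q = Σ ∏_{r=1}^ℓ [α_r; β^{(r)}]_q · ∏_{1≤s<r≤ℓ} ∏_{1≤i<j≤m} q^{β^{(r)}_i · β^{(s)}_j}, where the sum is over all tuples (β^{(1)},…,β^{(ℓ)}) of weak compositions of α_1,…,α_ℓ into m parts with componentwise sum β^{(1)} + ⋯ + β^{(ℓ)} = β. (This is an identity of polynomials in q.) -/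
/-!
The generalized `q`-Vandermonde identity for Gaussian multinomial coefficients,
as polynomials in `q`.
-/

open scoped Classical

noncomputable section

namespace CSP

open Polynomial

/-- The `q`-factorial `[N]_q! = ∏_{i=1}^N (1 + q + ⋯ + q^{i-1})`,
as a polynomial in `q`. -/
def qFac (N : ℕ) : Polynomial ℤ :=
  ∏ i ∈ Finset.range N, ∑ j ∈ Finset.range (i + 1), (X : Polynomial ℤ) ^ j

/-- The Gaussian multinomial coefficient `[N; γ]_q = [N]_q! / ([γ_1]_q! ⋯ [γ_m]_q!)`,
as a polynomial in `q` (the division, which is exact, is division by a monic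
polynomial). -/
def qMultinom (N : ℕ) {m : ℕ} (γ : Fin m → ℕ) : Polynomial ℤ :=
  qFac N /ₘ ∏ k : Fin m, qFac (γ k)

/-! ### Auxiliary material: the geometric polynomial and `q`-factorial facts -/

def geom (d : ℕ) : Polynomial ℤ := ∑ j ∈ Finset.range d, (X : Polynomial ℤ) ^ j

lemma qFac_eq (N : ℕ) : qFac N = ∏ i ∈ Finset.range N, geom (i + 1) := rfl

lemma qFac_succ (N : ℕ) : qFac (N + 1) = qFac N * geom (N + 1) := by
  rw [qFac_eq, qFac_eq, Finset.prod_range_succ]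

lemma geom_succ_monic (d : ℕ) : (geom (d + 1)).Monic := by
  induction d with
  | zero => simp [geom]
  | succ d ih =>
    have h2 : geom (d + 2) = X ^ (d + 1) + geom (d + 1) := by
      rw [geom, Finset.sum_range_succ, add_comm]; rfl
    rw [h2]
    refine (monic_X_pow (d + 1)).add_of_left ?_
    have h1 : (geom (d + 1)).degree ≤ d := by
      refine (Polynomial.degree_sum_le _ _).trans (Finset.sup_le ?_)
      intro j hj
      simp only [Finset.mem_range] at hj
      rw [Polynomial.degree_X_pow]
      exact_mod_cast Nat.cast_le.2 (Nat.lt_succ_iff.1 hj)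
    calc (geom (d + 1)).degree ≤ d := h1
      _ < (d + 1 : ℕ) := by exact_mod_cast Nat.lt_succ_self d
      _ = (X ^ (d + 1) : Polynomial ℤ).degree := (Polynomial.degree_X_pow _).symm

lemma qFac_monic (N : ℕ) : (qFac N).Monic := by
  rw [qFac_eq]; exact monic_prod_of_monic _ _ fun i _ => geom_succ_monic i

lemma geom_add (a b : ℕ) : geom (a + b) = geom a + X ^ a * geom b := by
  rw [geom, geom, geom, Finset.sum_range_add, Finset.mul_sum]
  simp [pow_add]

lemma telescope (δ : ℕ → ℕ) (t : ℕ) :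
    ∑ k ∈ Finset.range t, (X : Polynomial ℤ) ^ (∑ i ∈ Finset.range k, δ i) * geom (δ k)
      = geom (∑ k ∈ Finset.range t, δ k) := by
  induction t with
  | zero => simp [geom]
  | succ t ih => rw [Finset.sum_range_succ, ih, Finset.sum_range_succ (f := δ), geom_add]

/-! ### Words, contents, inversions -/

variable {N m : ℕ}

def cnt (w : Fin N → Fin m) (k : Fin m) : ℕ := ∑ p, if w p = k then 1 else 0

def inv (w : Fin N → Fin m) : ℕ := ∑ p, ∑ q, if p < q ∧ w q < w p then 1 else 0

def S (N : ℕ) {m : ℕ} (γ : Fin m → ℕ) : Polynomial ℤ :=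
  ∑ w ∈ Finset.univ.filter (fun w : Fin N → Fin m => ∀ k, cnt w k = γ k),
    (X : Polynomial ℤ) ^ inv w

lemma sum_cnt (w : Fin N → Fin m) : ∑ k, cnt w k = N := by
  unfold cnt
  rw [Finset.sum_comm]
  simp

lemma cnt_le (w : Fin N → Fin m) (k : Fin m) : cnt w k ≤ N := by
  unfold cnt
  calc (∑ p, if w p = k then 1 else 0) ≤ ∑ _p : Fin N, 1 :=
        Finset.sum_le_sum fun p _ => by split <;> omega
    _ = N := by simp

lemma sum_comp_cnt (w : Fin N → Fin m) (f : Fin m → ℕ) :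
    ∑ p, f (w p) = ∑ k, cnt w k * f k := by
  unfold cnt
  simp_rw [Finset.sum_mul, ite_mul, one_mul, zero_mul]
  rw [Finset.sum_comm]
  simp [Finset.sum_ite_eq]

lemma cnt_cons (k : Fin m) (w : Fin N → Fin m) (j : Fin m) :
    cnt (Fin.cons k w) j = (if k = j then 1 else 0) + cnt w j := by
  unfold cnt
  rw [Fin.sum_univ_succ]
  simp [Fin.cons_succ]

lemma inv_cons (k : Fin m) (w : Fin N → Fin m) :
    inv (Fin.cons k w) = (∑ q, if w q < k then 1 else 0) + inv w := by
  unfold inv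
  rw [Fin.sum_univ_succ]
  congr 1
  · rw [Fin.sum_univ_succ]
    simp [Fin.cons_succ, Fin.cons_zero, Fin.succ_pos]
  · refine Finset.sum_congr rfl fun p _ => ?_
    rw [Fin.sum_univ_succ]
    simp [Fin.cons_succ, Fin.cons_zero, Fin.succ_lt_succ_iff]

lemma S_eq_zero {γ : Fin m → ℕ} (h : ∑ k, γ k ≠ N) : S N γ = 0 := by
  unfold S
  rw [Finset.sum_eq_zero]
  intro w hw
  simp only [Finset.mem_filter] at hw
  exact absurd ((Finset.sum_congr rfl fun k _ => (hw.2 k).symm).trans (sum_cnt w)) h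

lemma S_rec (γ : Fin m → ℕ) (hs : ∑ k, γ k = N + 1) :
    S (N + 1) γ = ∑ k : Fin m,
      (X : Polynomial ℤ) ^ (∑ i : Fin m, if i < k then γ i else 0) *
        S N (Function.update γ k (γ k - 1)) := by
  unfold S
  rw [Finset.sum_filter, ← Equiv.sum_comp (Fin.consEquiv (fun _ : Fin (N + 1) => Fin m)),
    Fintype.sum_prod_type]
  refine Finset.sum_congr rfl fun k _ => ?_
  rw [Finset.sum_filter, Finset.mul_sum]
  refine Finset.sum_congr rfl fun w _ => ?_
  have hw_sum := sum_cnt w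
  rw [show (Fin.consEquiv fun _ : Fin (N + 1) => Fin m) (k, w) = Fin.cons k w from rfl]
  have hPQ : (∀ j, cnt (Fin.cons k w) j = γ j) ↔
      (∀ j, cnt w j = Function.update γ k (γ k - 1) j) := by
    constructor
    · intro h j
      have hj := h j
      rw [cnt_cons] at hj
      by_cases hjk : j = k
      · subst hjk
        rw [Function.update_self]
        simp only [if_true, eq_self_iff_true] at hj
        omega
      · rw [Function.update_of_ne hjk]
        simpa [Ne.symm hjk] using hj
    · intro h
      by_cases hk0 : γ k = 0
      · exfalso
        have heq : ∑ j, cnt w j = ∑ j, γ j := by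
          refine Finset.sum_congr rfl fun j _ => ?_
          rw [h j]
          by_cases hjk : j = k
          · subst hjk; rw [Function.update_self]; omega
          · rw [Function.update_of_ne hjk]
        omega
      · intro j
        rw [cnt_cons, h j]
        by_cases hjk : j = k
        · subst hjk
          rw [Function.update_self]
          simp only [if_true, eq_self_iff_true]
          omega
        · rw [Function.update_of_ne hjk]
          simp [Ne.symm hjk]
  by_cases hQ : ∀ j, cnt w j = Function.update γ k (γ k - 1) j
  · rw [if_pos (hPQ.2 hQ), if_pos hQ, inv_cons, pow_add]
    congr 2
    rw [sum_comp_cnt w (fun i => if i < k then 1 else 0)]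
    refine Finset.sum_congr rfl fun i _ => ?_
    by_cases hik : i < k
    · have hik' : i ≠ k := ne_of_lt hik
      rw [if_pos hik, if_pos hik, mul_one, hQ i, Function.update_of_ne hik']
    · rw [if_neg hik, if_neg hik, mul_zero]
  · rw [if_neg (fun hP => hQ (hPQ.1 hP)), if_neg hQ, mul_zero]

lemma S_mul : ∀ (N : ℕ) {m : ℕ} (γ : Fin m → ℕ), (∑ k, γ k) = N →
    S N γ * ∏ k, qFac (γ k) = qFac N := by
  intro N
  induction N with
  | zero =>
    intro m γ h
    have hγ : ∀ k, γ k = 0 := fun k =>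
      (Finset.sum_eq_zero_iff.mp h) k (Finset.mem_univ k)
    have h1 : S 0 γ = 1 := by
      unfold S
      rw [Finset.filter_true_of_mem (fun w _ k => by rw [hγ k]; unfold cnt; simp)]
      have : ∀ w : Fin 0 → Fin m, inv w = 0 := fun w => by unfold inv; simp
      simp [this]
    have h2 : (∏ k, qFac (γ k)) = 1 := by
      simp [hγ, qFac]
    rw [h1, h2, one_mul]
    simp [qFac]
  | succ N ih =>
    intro m γ h
    rw [S_rec γ h, Finset.sum_mul]
    have hterm : ∀ k : Fin m,
        (X : Polynomial ℤ) ^ (∑ i : Fin m, if i < k then γ i else 0) *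
          S N (Function.update γ k (γ k - 1)) * ∏ j, qFac (γ j)
        = (X : Polynomial ℤ) ^ (∑ i : Fin m, if i < k then γ i else 0) * geom (γ k) *
          qFac N := by
      intro k
      have hsplit : γ k + ∑ x ∈ Finset.univ.erase k, γ x = N + 1 := by
        rw [Finset.add_sum_erase _ _ (Finset.mem_univ k)]; exact h
      by_cases hk : γ k = 0
      · have hupd : Function.update γ k (γ k - 1) = γ := by
          funext j
          by_cases hj : j = k
          · subst hj; rw [Function.update_self]; omega
          · rw [Function.update_of_ne hj]
        rw [hupd, S_eq_zero (by omega), hk]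
        simp [geom]
      · have hup : ∑ j, Function.update γ k (γ k - 1) j = N := by
          rw [Finset.sum_update_of_mem (Finset.mem_univ k), Finset.sdiff_singleton_eq_erase]
          omega
        have hprod : (∏ j, qFac (γ j)) =
            geom (γ k) * ∏ j, qFac (Function.update γ k (γ k - 1) j) := by
          have hL : (∏ j, qFac (γ j))
              = qFac (γ k) * ∏ j ∈ Finset.univ.erase k, qFac (γ j) :=
            (Finset.mul_prod_erase _ _ (Finset.mem_univ k)).symm
          have hR : (∏ j, qFac (Function.update γ k (γ k - 1) j))
              = qFac (γ k - 1) * ∏ j ∈ Finset.univ.erase k, qFac (γ j) := by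
            rw [← Finset.mul_prod_erase Finset.univ _ (Finset.mem_univ k),
              Function.update_self]
            congr 1
            exact Finset.prod_congr rfl fun j hj => by
              rw [Function.update_of_ne (Finset.ne_of_mem_erase hj)]
          have hq : qFac (γ k) = geom (γ k) * qFac (γ k - 1) := by
            obtain ⟨d, hd⟩ : ∃ d, γ k = d + 1 := ⟨γ k - 1, by omega⟩
            rw [hd, qFac_succ, Nat.add_sub_cancel, mul_comm]
          rw [hL, hR, hq]; ring
        calc (X : Polynomial ℤ) ^ (∑ i : Fin m, if i < k then γ i else 0) *
              S N (Function.update γ k (γ k - 1)) * ∏ j, qFac (γ j)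
            = (X : Polynomial ℤ) ^ (∑ i : Fin m, if i < k then γ i else 0) * geom (γ k) *
              (S N (Function.update γ k (γ k - 1)) *
                ∏ j, qFac (Function.update γ k (γ k - 1) j)) := by rw [hprod]; ring
          _ = _ := by rw [ih _ hup]
    rw [Finset.sum_congr rfl fun k _ => hterm k, ← Finset.sum_mul, qFac_succ,
      mul_comm (qFac N)]
    congr 1
    set δ : ℕ → ℕ := fun i => if hi : i < m then γ ⟨i, hi⟩ else 0 with hδ
    have hfix : ∀ k : Fin m,
        (X : Polynomial ℤ) ^ (∑ i : Fin m, if i < k then γ i else 0) * geom (γ k)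
          = (fun j : ℕ => (X : Polynomial ℤ) ^ (∑ i ∈ Finset.range j, δ i) * geom (δ j))
              k.val := by
      intro k
      simp only []
      have e1 : γ k = δ k.val := by simp [hδ, k.isLt]
      have e2 : (∑ i : Fin m, if i < k then γ i else 0) = ∑ i ∈ Finset.range k.val, δ i := by
        have e3 : ∀ i : Fin m, (if i < k then γ i else 0)
            = (fun j : ℕ => if j < k.val then δ j else 0) i.val := by
          intro i
          simp only [Fin.lt_def, hδ, i.isLt, dif_pos]
        rw [Finset.sum_congr rfl fun i _ => e3 i,
          Fin.sum_univ_eq_sum_range (fun j : ℕ => if j < k.val then δ j else 0) m]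
        rw [← Finset.sum_filter]
        congr 1
        ext j
        simp only [Finset.mem_filter, Finset.mem_range]
        constructor
        · exact fun hj => hj.2
        · exact fun hj => ⟨lt_trans hj k.isLt, hj⟩
      rw [e1, e2]
    rw [Finset.sum_congr rfl fun k _ => hfix k,
      Fin.sum_univ_eq_sum_range
        (fun j : ℕ => (X : Polynomial ℤ) ^ (∑ i ∈ Finset.range j, δ i) * geom (δ j)) m,
      telescope]
    congr 1
    have : ∑ i ∈ Finset.range m, δ i = ∑ k : Fin m, γ k := by
      rw [← Fin.sum_univ_eq_sum_range]
      refine Finset.sum_congr rfl fun i _ => ?_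
      simp [hδ, i.isLt]
    omega

lemma qMultinom_eq_S {m : ℕ} (N : ℕ) (γ : Fin m → ℕ) (h : ∑ k, γ k = N) :
    qMultinom N γ = S N γ := by
  unfold qMultinom
  rw [← S_mul N γ h, mul_comm]
  exact Polynomial.mul_divByMonic_cancel_left _
    (monic_prod_of_monic _ _ fun k _ => qFac_monic _)

/-! ### Splitting a word into blocks -/

section blocks

variable {ℓ n : ℕ}

def δa (α : Fin ℓ → ℕ) : ℕ → ℕ := fun i => if h : i < ℓ then α ⟨i, h⟩ else 0

def off (α : Fin ℓ → ℕ) (r : Fin ℓ) : ℕ := ∑ i ∈ Finset.range r.val, δa α i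

lemma off_succ (α : Fin ℓ → ℕ) (r : Fin ℓ) :
    off α r + α r = ∑ i ∈ Finset.range (r.val + 1), δa α i := by
  rw [Finset.sum_range_succ]
  congr 1
  simp [δa, r.isLt]

lemma off_add_le (α : Fin ℓ → ℕ) {r s : Fin ℓ} (h : r < s) : off α r + α r ≤ off α s := by
  rw [off_succ, off]
  exact Finset.sum_le_sum_of_subset (Finset.range_subset_range.2 h)

lemma off_total (α : Fin ℓ → ℕ) (r : Fin ℓ) : off α r + α r ≤ ∑ t, α t := by
  rw [off_succ]
  have h2 : ∑ t, α t = ∑ i ∈ Finset.range ℓ, δa α i := by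
    rw [← Fin.sum_univ_eq_sum_range (δa α) ℓ]
    exact Finset.sum_congr rfl fun i _ => by simp [δa, i.isLt]
  rw [h2]
  exact Finset.sum_le_sum_of_subset (Finset.range_subset_range.2 r.isLt)

def bphi (α : Fin ℓ → ℕ) (hα : ∑ r, α r = n) : (Σ r : Fin ℓ, Fin (α r)) → Fin n :=
  fun x => ⟨off α x.1 + x.2.val, by
    have h1 := off_total α x.1
    have h2 := x.2.isLt
    omega⟩

lemma bphi_lt (α : Fin ℓ → ℕ) (hα : ∑ r, α r = n) (x y : Σ r : Fin ℓ, Fin (α r)) :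
    bphi α hα x < bphi α hα y ↔ (x.1 < y.1 ∨ (x.1 = y.1 ∧ x.2.val < y.2.val)) := by
  rw [Fin.lt_def]
  show off α x.1 + x.2.val < off α y.1 + y.2.val ↔ _
  rcases lt_trichotomy x.1 y.1 with h | h | h
  · have h2 := off_add_le α h
    have h3 := x.2.isLt
    constructor
    · intro _; exact Or.inl h
    · intro _; omega
  · have h4 : off α x.1 = off α y.1 := by rw [h]
    constructor
    · intro hlt
      right
      exact ⟨h, by omega⟩
    · rintro (hlt | ⟨_, hpq⟩)
      · exact absurd hlt (by rw [h]; exact lt_irrefl _)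
      · omega
  · have h2 := off_add_le α h
    have h3 := y.2.isLt
    constructor
    · intro hlt; omega
    · rintro (hlt | ⟨heq, _⟩)
      · exact absurd (hlt.trans h) (lt_irrefl _)
      · exact absurd (heq ▸ h) (lt_irrefl _)

lemma bphi_inj (α : Fin ℓ → ℕ) (hα : ∑ r, α r = n) : Function.Injective (bphi α hα) := by
  rintro ⟨r, p⟩ ⟨s, q⟩ hxy
  have hval : off α r + p.val = off α s + q.val := congrArg Fin.val hxy
  rcases lt_trichotomy r s with h | h | h
  · have h2 := off_add_le α h
    have h3 := p.isLt
    omega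
  · subst h
    have : p = q := Fin.ext (by omega)
    rw [this]
  · have h2 := off_add_le α h
    have h3 := q.isLt
    omega

def blockEquiv (α : Fin ℓ → ℕ) (hα : ∑ r, α r = n) : (Σ r : Fin ℓ, Fin (α r)) ≃ Fin n :=
  Equiv.ofBijective (bphi α hα)
    ((Fintype.bijective_iff_injective_and_card _).2
      ⟨bphi_inj α hα, by simp [Fintype.card_sigma, hα]⟩)

lemma blockEquiv_lt (α : Fin ℓ → ℕ) (hα : ∑ r, α r = n) (x y : Σ r : Fin ℓ, Fin (α r)) :
    blockEquiv α hα x < blockEquiv α hα y ↔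
      (x.1 < y.1 ∨ (x.1 = y.1 ∧ x.2.val < y.2.val)) :=
  bphi_lt α hα x y

lemma ite_split {a b c : Prop} [Decidable a] [Decidable b] [Decidable c]
    [Decidable ((a ∨ b) ∧ c)] [Decidable (b ∧ c)] [Decidable (a ∧ c)] (hab : ¬(a ∧ b)) :
    (if (a ∨ b) ∧ c then (1 : ℕ) else 0)
      = (if b ∧ c then 1 else 0) + (if a ∧ c then 1 else 0) := by
  by_cases ha : a
  · by_cases hc : c
    · rw [if_pos ⟨Or.inl ha, hc⟩, if_neg (fun h : b ∧ c => hab ⟨ha, h.1⟩), if_pos ⟨ha, hc⟩]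
    · rw [if_neg (fun h : (a ∨ b) ∧ c => hc h.2), if_neg (fun h : b ∧ c => hc h.2),
        if_neg (fun h : a ∧ c => hc h.2)]
  · by_cases hb : b
    · by_cases hc : c
      · rw [if_pos ⟨Or.inr hb, hc⟩, if_pos ⟨hb, hc⟩, if_neg (fun h : a ∧ c => ha h.1)]
      · rw [if_neg (fun h : (a ∨ b) ∧ c => hc h.2), if_neg (fun h : b ∧ c => hc h.2),
          if_neg (fun h : a ∧ c => hc h.2)]
    · rw [if_neg (fun h : (a ∨ b) ∧ c => h.1.elim ha hb), if_neg (fun h : b ∧ c => hb h.1),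
        if_neg (fun h : a ∧ c => ha h.1)]

lemma cross_count {a b : ℕ} (u : Fin a → Fin m) (v : Fin b → Fin m) :
    ∑ p : Fin a, ∑ q : Fin b, (if v q < u p then (1 : ℕ) else 0)
      = ∑ i, ∑ j, (if i < j then cnt v i * cnt u j else 0) := by
  have h1 : ∀ p, (∑ q, if v q < u p then (1 : ℕ) else 0)
      = ∑ i, cnt v i * (if i < u p then 1 else 0) :=
    fun p => sum_comp_cnt v (fun i => if i < u p then 1 else 0)
  rw [Finset.sum_congr rfl fun p _ => h1 p, Finset.sum_comm]
  refine Finset.sum_congr rfl fun i _ => ?_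
  rw [← Finset.mul_sum, sum_comp_cnt u (fun j => if i < j then 1 else 0), Finset.mul_sum]
  refine Finset.sum_congr rfl fun j _ => ?_
  by_cases hij : i < j <;> simp [hij, mul_comm]

variable {α : Fin ℓ → ℕ}

lemma cnt_glue (e : (Σ r : Fin ℓ, Fin (α r)) ≃ Fin n) (w : Fin n → Fin m) (k : Fin m) :
    cnt w k = ∑ r, cnt (fun p => w (e ⟨r, p⟩)) k := by
  unfold cnt
  rw [← Equiv.sum_comp e (fun x => if w x = k then (1 : ℕ) else 0),
    ← Finset.univ_sigma_univ, Finset.sum_sigma]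

lemma inv_glue (e : (Σ r : Fin ℓ, Fin (α r)) ≃ Fin n)
    (he : ∀ x y, e x < e y ↔ (x.1 < y.1 ∨ (x.1 = y.1 ∧ x.2.val < y.2.val)))
    (w : Fin n → Fin m) :
    inv w = (∑ r, inv (fun p => w (e ⟨r, p⟩)))
      + ∑ r, ∑ s, (if s < r then
          ∑ i, ∑ j, (if i < j
            then cnt (fun p => w (e ⟨r, p⟩)) i * cnt (fun p => w (e ⟨s, p⟩)) j
            else 0)
        else 0) := by
  have h0 : inv w = ∑ x : (Σ r : Fin ℓ, Fin (α r)), ∑ y : (Σ r : Fin ℓ, Fin (α r)),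
      if e x < e y ∧ w (e y) < w (e x) then 1 else 0 := by
    unfold inv
    rw [← Equiv.sum_comp e (fun p => ∑ q, if p < q ∧ w q < w p then (1 : ℕ) else 0)]
    exact Finset.sum_congr rfl fun x _ => (Equiv.sum_comp e _).symm
  have h1 : ∀ x y : (Σ r : Fin ℓ, Fin (α r)),
      (if e x < e y ∧ w (e y) < w (e x) then (1 : ℕ) else 0)
        = (if (x.1 = y.1 ∧ x.2.val < y.2.val) ∧ w (e y) < w (e x) then 1 else 0)
          + (if x.1 < y.1 ∧ w (e y) < w (e x) then 1 else 0) := by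
    intro x y
    rw [if_congr (and_congr_left' (he x y)) rfl rfl]
    exact ite_split (fun hc => absurd (hc.2.1 ▸ hc.1) (lt_irrefl _))
  rw [h0]
  rw [Finset.sum_congr rfl fun x _ => Finset.sum_congr rfl fun y _ => h1 x y]
  rw [Finset.sum_congr rfl fun x (_ : x ∈ Finset.univ) => Finset.sum_add_distrib,
    Finset.sum_add_distrib]
  congr 1
  · rw [← Finset.univ_sigma_univ, Finset.sum_sigma]
    refine Finset.sum_congr rfl fun r _ => ?_
    unfold inv
    refine Finset.sum_congr rfl fun p _ => ?_
    rw [Finset.sum_sigma]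
    rw [Finset.sum_eq_single r
      (fun s _ hs => Finset.sum_eq_zero fun q _ => if_neg (fun hc => hs hc.1.1.symm))
      (fun h => absurd (Finset.mem_univ r) h)]
    refine Finset.sum_congr rfl fun q _ => ?_
    exact if_congr
      ⟨fun h => ⟨Fin.lt_def.mpr h.1.2, h.2⟩, fun h => ⟨⟨rfl, Fin.lt_def.mp h.1⟩, h.2⟩⟩ rfl rfl
  · rw [← Finset.univ_sigma_univ, Finset.sum_sigma]
    have hmain : ∀ a : Fin ℓ, (∑ p : Fin (α a), ∑ y ∈ (Finset.univ : Finset (Fin ℓ)).sigma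
          (fun _ => Finset.univ),
        if (⟨a, p⟩ : Σ r : Fin ℓ, Fin (α r)).1 < y.1 ∧ w (e y) < w (e ⟨a, p⟩)
          then (1 : ℕ) else 0)
        = ∑ b : Fin ℓ, (if a < b then
            ∑ i, ∑ j, (if i < j
              then cnt (fun p => w (e ⟨b, p⟩)) i * cnt (fun p => w (e ⟨a, p⟩)) j
              else 0)
          else 0) := by
      intro a
      have hy : ∀ p : Fin (α a), (∑ y ∈ (Finset.univ : Finset (Fin ℓ)).sigma
            (fun _ => Finset.univ),
          if (⟨a, p⟩ : Σ r : Fin ℓ, Fin (α r)).1 < y.1 ∧ w (e y) < w (e ⟨a, p⟩)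
            then (1 : ℕ) else 0)
          = ∑ b : Fin ℓ, ∑ q : Fin (α b),
            if a < b ∧ w (e ⟨b, q⟩) < w (e ⟨a, p⟩) then (1 : ℕ) else 0 :=
        fun p => Finset.sum_sigma _ _ _
      rw [Finset.sum_congr rfl fun p _ => hy p, Finset.sum_comm]
      refine Finset.sum_congr rfl fun b _ => ?_
      by_cases hab : a < b
      · rw [if_pos hab]
        rw [Finset.sum_congr rfl fun p (_ : p ∈ Finset.univ) => Finset.sum_congr rfl
          fun q (_ : q ∈ Finset.univ) => if_congr (and_iff_right hab) rfl rfl]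
        exact cross_count (fun p => w (e ⟨a, p⟩)) (fun q => w (e ⟨b, q⟩))
      · rw [if_neg hab]
        exact Finset.sum_eq_zero fun p _ => Finset.sum_eq_zero fun q _ =>
          if_neg (fun hc => hab hc.1)
    rw [Finset.sum_congr rfl fun a _ => hmain a, Finset.sum_comm]

def cmap (α : Fin ℓ → ℕ) (hα : ∑ r, α r = n) (w : Fin n → Fin m) (r : Fin ℓ) (k : Fin m) :
    Fin (n + 1) :=
  ⟨cnt (fun p => w (blockEquiv α hα ⟨r, p⟩)) k, by
    have h1 := cnt_le (fun p => w (blockEquiv α hα ⟨r, p⟩)) k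
    have h2 : α r ≤ n := hα ▸ Finset.single_le_sum (f := α)
      (fun _ _ => Nat.zero_le _) (Finset.mem_univ r)
    omega⟩

lemma cmap_val (α : Fin ℓ → ℕ) (hα : ∑ r, α r = n) (w : Fin n → Fin m) (r : Fin ℓ)
    (k : Fin m) :
    ((cmap α hα w r k : ℕ)) = cnt (fun p => w (blockEquiv α hα ⟨r, p⟩)) k := rfl

end blocks

/-- **Generalized q-Vandermonde identity for multinomials.** For compositions `α`
(into `ℓ` parts) and `β` (into `m` parts) of `n`,
`[n;β]_q = Σ ∏_r [α_r; β^{(r)}]_q · ∏_{s<r} ∏_{i<j} q^{β^{(r)}_i β^{(s)}_j}`,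
summed over tuples of weak compositions `β^{(r)}` of `α_r` into `m` parts with
componentwise sum `β`. -/
theorem qMultinom_vandermonde
    (n ℓ m : ℕ) (α : Fin ℓ → ℕ) (β : Fin m → ℕ)
    (hαpos : ∀ r, 0 < α r) (hα : ∑ r, α r = n)
    (hβpos : ∀ k, 0 < β k) (hβ : ∑ k, β k = n) :
    qMultinom n β =
      ∑ g ∈ Finset.univ.filter
          (fun g : Fin ℓ → Fin m → Fin (n + 1) =>
            (∀ r, ∑ k, ((g r k : ℕ)) = α r) ∧ ∀ k, ∑ r, ((g r k : ℕ)) = β k),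
        (∏ r : Fin ℓ, qMultinom (α r) (fun k => ((g r k : ℕ)))) *
          ∏ r : Fin ℓ, ∏ s : Fin ℓ,
            if s < r then
              ∏ i : Fin m, ∏ j : Fin m,
                if i < j then (X : Polynomial ℤ) ^ (((g r i : ℕ)) * ((g s j : ℕ)))
                else 1
            else 1 := by
  have he := blockEquiv_lt α hα
  set e := blockEquiv α hα with hedef
  rw [qMultinom_eq_S n β hβ]
  have hmaps : ∀ w ∈ Finset.univ.filter (fun w : Fin n → Fin m => ∀ k, cnt w k = β k),
      cmap α hα w ∈ Finset.univ.filter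
        (fun g : Fin ℓ → Fin m → Fin (n + 1) =>
          (∀ r, ∑ k, ((g r k : ℕ)) = α r) ∧ ∀ k, ∑ r, ((g r k : ℕ)) = β k) := by
    intro w hw
    simp only [Finset.mem_filter, Finset.mem_univ, true_and, cmap_val] at hw ⊢
    refine ⟨fun r => sum_cnt _, fun k => ?_⟩
    rw [← hedef, ← cnt_glue e w k]
    exact hw k
  rw [show S n β = ∑ w ∈ Finset.univ.filter (fun w : Fin n → Fin m => ∀ k, cnt w k = β k),
        (X : Polynomial ℤ) ^ inv w from rfl,
    ← Finset.sum_fiberwise_of_maps_to hmaps (fun w => (X : Polynomial ℤ) ^ inv w)]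
  refine Finset.sum_congr rfl fun g hg => ?_
  simp only [Finset.mem_filter, Finset.mem_univ, true_and] at hg
  obtain ⟨hgA, hgB⟩ := hg
  rw [Finset.prod_congr rfl fun r (_ : r ∈ Finset.univ) =>
    qMultinom_eq_S (α r) (fun k => ((g r k : ℕ))) (hgA r)]
  have hU : (Finset.univ.filter (fun w : Fin n → Fin m => ∀ k, cnt w k = β k)).filter
        (fun w => cmap α hα w = g)
      = Finset.univ.filter
        (fun w : Fin n → Fin m => ∀ r k, cnt (fun p => w (e ⟨r, p⟩)) k = ((g r k : ℕ))) := by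
    ext w
    simp only [Finset.mem_filter, Finset.mem_univ, true_and]
    constructor
    · rintro ⟨_, hcw⟩ r k
      rw [← hcw, cmap_val, ← hedef]
    · intro hall
      refine ⟨fun k => ?_, ?_⟩
      · rw [cnt_glue e w k, Finset.sum_congr rfl fun r _ => hall r k]
        exact hgB k
      · funext r k
        exact Fin.ext ((cmap_val α hα w r k).trans ((hedef ▸ hall r k)))
  rw [hU]
  have hsummand : ∀ w ∈ Finset.univ.filter
      (fun w : Fin n → Fin m => ∀ r k, cnt (fun p => w (e ⟨r, p⟩)) k = ((g r k : ℕ))),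
      (X : Polynomial ℤ) ^ inv w
        = (∏ r : Fin ℓ, (X : Polynomial ℤ) ^ inv (fun p => w (e ⟨r, p⟩)))
          * ∏ r : Fin ℓ, ∏ s : Fin ℓ,
              (if s < r then ∏ i : Fin m, ∏ j : Fin m,
                (if i < j then (X : Polynomial ℤ) ^ (((g r i : ℕ)) * ((g s j : ℕ))) else 1)
              else 1) := by
    intro w hw
    simp only [Finset.mem_filter, Finset.mem_univ, true_and] at hw
    rw [inv_glue e he w, pow_add]
    congr 1
    · exact (Finset.prod_pow_eq_pow_sum _ _ _).symm
    · rw [← Finset.prod_pow_eq_pow_sum]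
      refine Finset.prod_congr rfl fun r _ => ?_
      rw [← Finset.prod_pow_eq_pow_sum]
      refine Finset.prod_congr rfl fun s _ => ?_
      by_cases hsr : s < r
      · rw [if_pos hsr, if_pos hsr, ← Finset.prod_pow_eq_pow_sum]
        refine Finset.prod_congr rfl fun i _ => ?_
        rw [← Finset.prod_pow_eq_pow_sum]
        refine Finset.prod_congr rfl fun j _ => ?_
        by_cases hij : i < j
        · rw [if_pos hij, if_pos hij, hw r i, hw s j]
        · rw [if_neg hij, if_neg hij, pow_zero]
      · rw [if_neg hsr, if_neg hsr, pow_zero]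
  rw [Finset.sum_congr rfl hsummand, ← Finset.sum_mul]
  congr 1
  have hprodS : (∏ r : Fin ℓ, S (α r) (fun k => ((g r k : ℕ))))
      = ∑ W ∈ Fintype.piFinset (fun r => Finset.univ.filter
          (fun w' : Fin (α r) → Fin m => ∀ k, cnt w' k = ((g r k : ℕ)))),
        ∏ r, (X : Polynomial ℤ) ^ inv (W r) :=
    Finset.prod_univ_sum _ _
  rw [hprodS]
  refine Finset.sum_nbij' (i := fun w r p => w (e ⟨r, p⟩))
    (j := fun W x => W (e.symm x).1 (e.symm x).2) ?_ ?_ ?_ ?_ ?_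
  · intro w hw
    simp only [Finset.mem_filter, Finset.mem_univ, true_and] at hw
    rw [Fintype.mem_piFinset]
    intro r
    simp only [Finset.mem_filter, Finset.mem_univ, true_and]
    exact fun k => hw r k
  · intro W hW
    rw [Fintype.mem_piFinset] at hW
    simp only [Finset.mem_filter, Finset.mem_univ, true_and] at hW ⊢
    intro r k
    have hjW : (fun p => W (e.symm (e ⟨r, p⟩)).1 (e.symm (e ⟨r, p⟩)).2) = W r := by
      funext p
      rw [Equiv.symm_apply_apply]
    rw [hjW]
    exact hW r k
  · intro w hw
    funext x
    show w (e ⟨(e.symm x).1, (e.symm x).2⟩) = w x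
    rw [Sigma.eta, Equiv.apply_symm_apply]
  · intro W hW
    funext r p
    show W (e.symm (e ⟨r, p⟩)).1 (e.symm (e ⟨r, p⟩)).2 = W r p
    rw [Equiv.symm_apply_apply]
  · intro w hw
    rfl


end CSP
end
end
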